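/- arXiv:2206.13253 — 8 statements merged into one kernel-verified Lean document; each statement's English description precedes it below -/
import Mathlib

section
/- Let n, m ≥ 2 be integers, let O ∈ ℂ and r > 0, and let P and Q be the vertex sets of a regular n-gon and of a regular m-gon, respectively, both inscribed in the circle with center O and radius r. Then there exists a nontrivial rotation about O mapping the set P ∪ Q onto itself if and only if gcd(n, m) > 1. (Equivalently: P ∪ Q is not rotationally symmetric if and only if n and m are coprime.) -/
noncomputable section

/-- The vertex set of a regular `n`-gon inscribed in the circle of center `O`
and radius `r`, with phase `θ`. -/
def regularVerts (n : ℕ) (O : ℂ) (r θ : ℝ) : Set ℂ :=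
  {z | ∃ k : ℕ, k < n ∧
    z = O + (r : ℂ) * Complex.exp (((θ + 2 * Real.pi * k / n : ℝ) : ℂ) * Complex.I)}

/-- `P` is the vertex set of some regular `n`-gon inscribed in the circle of
center `O` and radius `r`. -/
def IsRegularNGon (n : ℕ) (O : ℂ) (r : ℝ) (P : Set ℂ) : Prop :=
  ∃ θ : ℝ, P = regularVerts n O r θ

private lemma mem_regularVerts_iff {n : ℕ} (hn : 0 < n) (O : ℂ) (r θ : ℝ) (z : ℂ) :
    z ∈ regularVerts n O r θ ↔
      ∃ ζ : ℂ, ζ ^ n = 1 ∧ z = O + (r : ℂ) * Complex.exp ((θ : ℂ) * Complex.I) * ζ := by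
  have hn' : (n : ℂ) ≠ 0 := Nat.cast_ne_zero.mpr hn.ne'
  constructor
  · rintro ⟨k, hk, rfl⟩
    refine ⟨Complex.exp (((2 * Real.pi * k / n : ℝ) : ℂ) * Complex.I), ?_, ?_⟩
    · rw [← Complex.exp_nat_mul]
      have h : (n : ℂ) * (((2 * Real.pi * k / n : ℝ) : ℂ) * Complex.I)
          = (k : ℤ) * (2 * (Real.pi : ℂ) * Complex.I) := by
        push_cast; field_simp
      rw [h, Complex.exp_int_mul_two_pi_mul_I]
    · have hx : ((θ + 2 * Real.pi * k / n : ℝ) : ℂ) * Complex.I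
          = (θ : ℂ) * Complex.I + ((2 * Real.pi * k / n : ℝ) : ℂ) * Complex.I := by
        push_cast; ring
      rw [hx, Complex.exp_add]; ring
  · rintro ⟨ζ, hζ, rfl⟩
    have : NeZero n := ⟨hn.ne'⟩
    obtain ⟨k, hk, rfl⟩ := (Complex.isPrimitiveRoot_exp n hn.ne').eq_pow_of_pow_eq_one hζ
    refine ⟨k, hk, ?_⟩
    rw [← Complex.exp_nat_mul, mul_assoc, ← Complex.exp_add]
    congr 2
    push_cast
    field_simp

private lemma common_pow_eq_one {n m : ℕ} (h : Nat.gcd n m = 1) {w : ℂ}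
    (h1 : w ^ n = 1) (h2 : w ^ m = 1) : w = 1 := by
  have d1 := orderOf_dvd_of_pow_eq_one h1
  have d2 := orderOf_dvd_of_pow_eq_one h2
  have hd := Nat.dvd_gcd d1 d2
  rw [h, Nat.dvd_one] at hd
  exact orderOf_eq_one_iff.mp hd

private lemma ratio_pow {k : ℕ} {x y w : ℂ} (hx : x ^ k = 1) (hy : y ^ k = 1)
    (h : w * x = y) : w ^ k = 1 := by
  rcases Nat.eq_zero_or_pos k with rfl | hk
  · simp
  have hx0 : x ≠ 0 := by
    intro h0; rw [h0, zero_pow hk.ne'] at hx; exact one_ne_zero hx.symm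
  have hw : w = y / x := (eq_div_iff hx0).mpr h
  rw [hw, div_pow, hx, hy, div_one]

private lemma rot_mem {n : ℕ} (hn : 0 < n) (O : ℂ) (r θ : ℝ) {u z : ℂ}
    (hu : u ^ n = 1) (hz : z ∈ regularVerts n O r θ) :
    O + u * (z - O) ∈ regularVerts n O r θ := by
  rw [mem_regularVerts_iff hn] at hz ⊢
  obtain ⟨ζ, hζ, rfl⟩ := hz
  exact ⟨u * ζ, by rw [mul_pow, hu, hζ, one_mul], by ring⟩

/-- There exists a nontrivial rotation about `O` mapping `P ∪ Q` onto itself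
iff `gcd n m > 1`. -/
theorem stmt0 (n m : ℕ) (hn : 2 ≤ n) (hm : 2 ≤ m) (O : ℂ) (r : ℝ) (hr : 0 < r)
    (P Q : Set ℂ) (hP : IsRegularNGon n O r P) (hQ : IsRegularNGon m O r Q) :
    (∃ u : ℂ, ‖u‖ = 1 ∧ u ≠ 1 ∧
      (fun z => O + u * (z - O)) '' (P ∪ Q) = P ∪ Q) ↔ 1 < Nat.gcd n m := by
  obtain ⟨θ₁, rfl⟩ := hP
  obtain ⟨θ₂, rfl⟩ := hQ
  have hn0 : 0 < n := by omega
  have hm0 : 0 < m := by omega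
  set c : ℂ := (r : ℂ) * Complex.exp ((θ₁ : ℂ) * Complex.I) with hc
  set d : ℂ := (r : ℂ) * Complex.exp ((θ₂ : ℂ) * Complex.I) with hd
  have hr0 : (r : ℂ) ≠ 0 := by exact_mod_cast hr.ne'
  have hc0 : c ≠ 0 := mul_ne_zero hr0 (Complex.exp_ne_zero _)
  have hd0 : d ≠ 0 := mul_ne_zero hr0 (Complex.exp_ne_zero _)
  have hPmem : ∀ ζ : ℂ, ζ ^ n = 1 → O + c * ζ ∈ regularVerts n O r θ₁ :=
    fun ζ h => (mem_regularVerts_iff hn0 O r θ₁ _).mpr ⟨ζ, h, rfl⟩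
  have hQmem : ∀ ξ : ℂ, ξ ^ m = 1 → O + d * ξ ∈ regularVerts m O r θ₂ :=
    fun ξ h => (mem_regularVerts_iff hm0 O r θ₂ _).mpr ⟨ξ, h, rfl⟩
  constructor
  · rintro ⟨u, habs, hu1, himg⟩
    by_contra hg
    have hg1 : Nat.gcd n m = 1 := by
      have := Nat.gcd_pos_of_pos_left m hn0
      omega
    exfalso
    apply hu1
    have hsub : ∀ z ∈ regularVerts n O r θ₁ ∪ regularVerts m O r θ₂,
        O + u * (z - O) ∈ regularVerts n O r θ₁ ∪ regularVerts m O r θ₂ := by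
      intro z hz
      rw [← himg]
      exact ⟨z, hz, rfl⟩
    -- primitive roots
    set μn : ℂ := Complex.exp (2 * Real.pi * Complex.I / n) with hμn
    set μm : ℂ := Complex.exp (2 * Real.pi * Complex.I / m) with hμm
    have hprimn := Complex.isPrimitiveRoot_exp n hn0.ne'
    have hprimm := Complex.isPrimitiveRoot_exp m hm0.ne'
    have hμn1 : μn ^ n = 1 := hprimn.pow_eq_one
    have hμm1 : μm ^ m = 1 := hprimm.pow_eq_one
    have hμnne : μn ≠ 1 := hprimn.ne_one hn
    have hμmne : μm ≠ 1 := hprimm.ne_one hm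
    -- generic extraction from membership
    have extractP : ∀ w : ℂ, O + w ∈ regularVerts n O r θ₁ → ∃ ζ : ℂ, ζ ^ n = 1 ∧ w = c * ζ := by
      intro w hw
      obtain ⟨ζ, h1, h2⟩ := (mem_regularVerts_iff hn0 O r θ₁ _).mp hw
      exact ⟨ζ, h1, by rw [← hc] at h2; exact add_left_cancel h2⟩
    have extractQ : ∀ w : ℂ, O + w ∈ regularVerts m O r θ₂ → ∃ ξ : ℂ, ξ ^ m = 1 ∧ w = d * ξ := by
      intro w hw
      obtain ⟨ξ, h1, h2⟩ := (mem_regularVerts_iff hm0 O r θ₂ _).mp hw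
      exact ⟨ξ, h1, by rw [← hd] at h2; exact add_left_cancel h2⟩
    -- Step 1: u ^ n = 1
    have key1 : u ^ n = 1 := by
      have e1 := hsub (O + c * 1) (Or.inl (hPmem 1 (one_pow n)))
      have e2 := hsub (O + c * μn) (Or.inl (hPmem μn hμn1))
      rw [add_sub_cancel_left] at e1 e2
      rcases e1 with h1 | h1
      · obtain ⟨ζ, hζ, heq⟩ := extractP _ h1
        have : u * 1 = ζ := by
          apply mul_left_cancel₀ hc0
          rw [mul_one] at heq ⊢
          linear_combination heq
        exact ratio_pow (one_pow n) hζ this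
      · rcases e2 with h2 | h2
        · obtain ⟨ζ, hζ, heq⟩ := extractP _ h2
          have : u * μn = ζ := by
            apply mul_left_cancel₀ hc0
            linear_combination heq
          exact ratio_pow hμn1 hζ this
        · -- both in Q : contradiction with gcd = 1
          obtain ⟨ξ₁, hξ₁, heq₁⟩ := extractQ _ h1
          obtain ⟨ξ₂, hξ₂, heq₂⟩ := extractQ _ h2
          have hμ : μn * ξ₁ = ξ₂ := by
            apply mul_left_cancel₀ hd0
            rw [mul_one] at heq₁
            linear_combination heq₂ - μn * heq₁
          have h3 : μn ^ m = 1 := ratio_pow hξ₁ hξ₂ hμ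
          exact absurd (common_pow_eq_one hg1 hμn1 h3) hμnne
    -- Step 2: u ^ m = 1
    have key2 : u ^ m = 1 := by
      have e1 := hsub (O + d * 1) (Or.inr (hQmem 1 (one_pow m)))
      have e2 := hsub (O + d * μm) (Or.inr (hQmem μm hμm1))
      rw [add_sub_cancel_left] at e1 e2
      rcases e1 with h1 | h1
      · rcases e2 with h2 | h2
        · -- both in P: contradiction
          obtain ⟨ζ₁, hζ₁, heq₁⟩ := extractP _ h1
          obtain ⟨ζ₂, hζ₂, heq₂⟩ := extractP _ h2
          have hμ : μm * ζ₁ = ζ₂ := by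
            apply mul_left_cancel₀ hc0
            rw [mul_one] at heq₁
            linear_combination heq₂ - μm * heq₁
          have h3 : μm ^ n = 1 := ratio_pow hζ₁ hζ₂ hμ
          exact absurd (common_pow_eq_one hg1 h3 hμm1) hμmne
        · obtain ⟨ξ, hξ, heq⟩ := extractQ _ h2
          have : u * μm = ξ := by
            apply mul_left_cancel₀ hd0
            linear_combination heq
          exact ratio_pow hμm1 hξ this
      · obtain ⟨ξ, hξ, heq⟩ := extractQ _ h1
        have : u * 1 = ξ := by
          apply mul_left_cancel₀ hd0
          rw [mul_one] at heq ⊢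
          linear_combination heq
        exact ratio_pow (one_pow m) hξ this
    exact common_pow_eq_one hg1 key1 key2
  · intro hg
    set g : ℕ := Nat.gcd n m with hgdef
    have hg0 : (g : ℕ) ≠ 0 := by omega
    set u : ℂ := Complex.exp (((2 * Real.pi / g : ℝ) : ℂ) * Complex.I) with hu
    have hueq : u = Complex.exp (2 * Real.pi * Complex.I / g) := by
      rw [hu]; congr 1; push_cast; ring
    have hprim := Complex.isPrimitiveRoot_exp g hg0
    rw [← hueq] at hprim
    have hug : u ^ g = 1 := hprim.pow_eq_one
    have hun : u ^ n = 1 := by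
      obtain ⟨s, hs⟩ := Nat.gcd_dvd_left n m
      rw [hs, pow_mul, hug, one_pow]
    have hum : u ^ m = 1 := by
      obtain ⟨s, hs⟩ := Nat.gcd_dvd_right n m
      rw [hs, pow_mul, hug, one_pow]
    have hu0 : u ≠ 0 := Complex.exp_ne_zero _
    refine ⟨u, Complex.norm_exp_ofReal_mul_I _, hprim.ne_one hg, ?_⟩
    have huinv_n : (u⁻¹) ^ n = 1 := by rw [inv_pow, hun, inv_one]
    have huinv_m : (u⁻¹) ^ m = 1 := by rw [inv_pow, hum, inv_one]
    ext w
    constructor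
    · rintro ⟨z, hz, rfl⟩
      rcases hz with h | h
      · exact Or.inl (rot_mem hn0 O r θ₁ hun h)
      · exact Or.inr (rot_mem hm0 O r θ₂ hum h)
    · intro hw
      refine ⟨O + u⁻¹ * (w - O), ?_, ?_⟩
      · rcases hw with h | h
        · exact Or.inl (rot_mem hn0 O r θ₁ huinv_n h)
        · exact Or.inr (rot_mem hm0 O r θ₂ huinv_m h)
      · show O + u * (O + u⁻¹ * (w - O) - O) = w
        field_simp
        ring
end
end

section
/- Let n, m ≥ 2 be integers with gcd(n, m) = 1, let O ∈ ℂ and r > 0, and let P and Q be the vertex sets of a regular n-gon and of a regular m-gon, respectively, both inscribed in the circle with center O and radius r. Then P and Q intersect in at most one point, i.e. the set P ∩ Q has at most one element. -/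
noncomputable section

lemma phase_eq {r : ℝ} (hr : 0 < r) {O : ℂ} {a b : ℝ}
    (h : O + (r:ℂ) * Complex.exp ((a:ℂ) * Complex.I)
       = O + (r:ℂ) * Complex.exp ((b:ℂ) * Complex.I)) :
    ∃ t : ℤ, a = b + t * (2 * Real.pi) := by
  have hr' : (r:ℂ) ≠ 0 := by exact_mod_cast hr.ne'
  have h2 : Complex.exp ((a:ℂ)*Complex.I) = Complex.exp ((b:ℂ)*Complex.I) :=
    mul_left_cancel₀ hr' (add_left_cancel h)
  rw [Complex.exp_eq_exp_iff_exists_int] at h2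
  obtain ⟨t, ht⟩ := h2
  refine ⟨t, ?_⟩
  have h3 : ((a:ℂ)) * Complex.I = ((b + t * (2*Real.pi) : ℝ):ℂ) * Complex.I := by
    push_cast
    linear_combination ht
  have h4 := mul_right_cancel₀ Complex.I_ne_zero h3
  exact_mod_cast h4

/-- If `gcd n m = 1`, the vertex sets of a regular `n`-gon and a regular `m`-gon
inscribed in the same circle intersect in at most one point. -/
theorem stmt1 (n m : ℕ) (hn : 2 ≤ n) (hm : 2 ≤ m) (hgcd : Nat.gcd n m = 1)
    (O : ℂ) (r : ℝ) (hr : 0 < r)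
    (P Q : Set ℂ) (hP : IsRegularNGon n O r P) (hQ : IsRegularNGon m O r Q) :
    (P ∩ Q).Subsingleton := by
  obtain ⟨θ, rfl⟩ := hP
  obtain ⟨φ, rfl⟩ := hQ
  intro z₁ hz₁ z₂ hz₂
  obtain ⟨⟨k₁, hk₁, e₁⟩, ⟨l₁, hl₁, f₁⟩⟩ := hz₁
  obtain ⟨⟨k₂, hk₂, e₂⟩, ⟨l₂, hl₂, f₂⟩⟩ := hz₂
  obtain ⟨t₁, ht₁⟩ := phase_eq hr (e₁.symm.trans f₁)
  obtain ⟨t₂, ht₂⟩ := phase_eq hr (e₂.symm.trans f₂)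
  -- rational phase equality
  have hq : (k₁ : ℚ)/n - l₁/m - t₁ = (k₂ : ℚ)/n - l₂/m - t₂ := by
    have hcast : (((k₁ : ℚ)/n - l₁/m - t₁ : ℚ) : ℝ) = (((k₂ : ℚ)/n - l₂/m - t₂ : ℚ) : ℝ) := by
      have h2pi : (2 * Real.pi) ≠ 0 := by positivity
      refine mul_right_cancel₀ h2pi ?_
      push_cast
      linear_combination ht₁ - ht₂
    exact_mod_cast hcast
  have hn0 : ((n:ℚ)) ≠ 0 := by positivity
  have hm0 : ((m:ℚ)) ≠ 0 := by positivity
  have hZ : (m:ℤ) * k₁ - n * l₁ - n*m*t₁ = (m:ℤ) * k₂ - n * l₂ - n*m*t₂ := by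
    have : ((m:ℚ)) * k₁ - n * l₁ - n*m*t₁ = ((m:ℚ)) * k₂ - n * l₂ - n*m*t₂ := by
      field_simp at hq
      ring_nf at hq ⊢
      linarith [hq]
    exact_mod_cast this
  have hdvd : (n:ℤ) ∣ (m:ℤ) * ((k₁:ℤ) - k₂) :=
    ⟨(l₁:ℤ) - l₂ + m*(t₁-t₂), by ring_nf; linarith [hZ]⟩
  have hcop : IsCoprime (n:ℤ) (m:ℤ) := by
    rw [Int.isCoprime_iff_gcd_eq_one]
    exact_mod_cast hgcd
  have hdvd2 : (n:ℤ) ∣ ((k₁:ℤ) - k₂) := hcop.dvd_of_dvd_mul_left hdvd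
  have hk : k₁ = k₂ := by
    obtain ⟨c, hc⟩ := hdvd2
    have hn1 : (1:ℤ) ≤ n := by exact_mod_cast Nat.one_le_of_lt hn
    have hck₁ : (k₁:ℤ) < n := by exact_mod_cast hk₁
    have hck₂ : (k₂:ℤ) < n := by exact_mod_cast hk₂
    have hc0 : c = 0 := by nlinarith [Int.natCast_nonneg k₁, Int.natCast_nonneg k₂]
    rw [hc0, mul_zero] at hc
    omega
  rw [e₁, e₂, hk]
end
end

section
/- Let n, m ≥ 2 be integers with gcd(n, m) = 1, let O ∈ ℂ and r > 0, and let P and Q be the vertex sets of a regular n-gon and of a regular m-gon, respectively, both inscribed in the circle c with center O and radius r. Suppose (V1, W1) and (V2, W2) are two distinct pairs in P × Q such that V1 ≠ V2, W1 ≠ W2, each pair (Vi, Wi) is adjacent in P ∪ Q, and the two gap angles are equal to a common value α with 0 < α < π. Then the reflection of the plane across the perpendicular bisector of the segment V1V2 maps P ∪ Q onto itself; moreover, if M1 and M2 denote the midpoints of the empty open arcs realizing the gap angles of (V1, W1) and (V2, W2) respectively, then M1 and M2 are not antipodal on c, i.e. M1 + M2 ≠ 2·O. -/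
noncomputable section

/-- Rotation about `O` by angle `t` (counterclockwise). -/
def rotAbout (O : ℂ) (t : ℝ) (z : ℂ) : ℂ :=
  O + (z - O) * Complex.exp ((t : ℂ) * Complex.I)

/-- `(V, W)` is an adjacent pair of the set `S` (contained in a circle centered
at `O`) whose gap angle is `α` and whose empty open arc has midpoint `M`:
either the open arc of angular measure `α` going counterclockwise from `V` ends
at `W` and contains no point of `S`, or symmetrically with `V` and `W`
interchanged; `M` is the midpoint of that empty arc. -/
def IsGapWithMid (S : Set ℂ) (O V W : ℂ) (α : ℝ) (M : ℂ) : Prop :=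
  V ∈ S ∧ W ∈ S ∧ V ≠ W ∧ 0 < α ∧ α < 2 * Real.pi ∧
    ((W = rotAbout O α V ∧ (∀ t : ℝ, 0 < t → t < α → rotAbout O t V ∉ S) ∧
        M = rotAbout O (α / 2) V) ∨
      (V = rotAbout O α W ∧ (∀ t : ℝ, 0 < t → t < α → rotAbout O t W ∉ S) ∧
        M = rotAbout O (α / 2) W))

/-- Reflection of the plane across the perpendicular bisector of the segment
`V1 V2` (for `V1 ≠ V2`): the unique reflection interchanging `V1` and `V2`. -/
def perpBisectorReflection (V1 V2 : ℂ) : ℂ → ℂ := fun z =>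
  (V1 + V2) / 2 - (V2 - V1) / (starRingEnd ℂ) (V2 - V1) * (starRingEnd ℂ) (z - (V1 + V2) / 2)

/-! ### Auxiliary lemmas -/

lemma rot_eq (O : ℂ) (r t φ : ℝ) :
    rotAbout O t (O + (r:ℂ) * Complex.exp ((φ:ℂ) * Complex.I))
      = O + (r:ℂ) * Complex.exp (((φ + t : ℝ):ℂ) * Complex.I) := by
  unfold rotAbout
  push_cast
  rw [add_mul, Complex.exp_add]
  ring

lemma exp_angle_eq {x y : ℝ}
    (h : Complex.exp ((x:ℂ) * Complex.I) = Complex.exp ((y:ℂ) * Complex.I)) :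
    ∃ t : ℤ, x = y + 2 * Real.pi * t := by
  rw [Complex.exp_eq_exp_iff_exists_int] at h
  obtain ⟨t, ht⟩ := h
  refine ⟨t, ?_⟩
  have h3 : ((x:ℂ)) = (y:ℂ) + t * (2 * Real.pi) := by
    have : ((x:ℂ)) * Complex.I = ((y:ℂ) + t * (2 * Real.pi)) * Complex.I := by
      rw [ht]; ring
    exact mul_right_cancel₀ Complex.I_ne_zero this
  have h4 : ((x:ℂ)) = ((y + 2 * Real.pi * t : ℝ) : ℂ) := by push_cast; linear_combination h3
  exact_mod_cast h4

lemma ang_of_eq (O : ℂ) (r : ℝ) (hr : r ≠ 0) (x y : ℝ)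
    (h : O + (r:ℂ) * Complex.exp ((x:ℂ) * Complex.I)
       = O + (r:ℂ) * Complex.exp ((y:ℂ) * Complex.I)) :
    ∃ t : ℤ, x = y + 2 * Real.pi * t := by
  have hr' : (r:ℂ) ≠ 0 := Complex.ofReal_ne_zero.mpr hr
  exact exp_angle_eq (mul_left_cancel₀ hr' (add_left_cancel h))

lemma exp_eq_of (x y : ℝ) (t : ℤ) (h : x = y + 2 * Real.pi * t) :
    Complex.exp ((x:ℂ) * Complex.I) = Complex.exp ((y:ℂ) * Complex.I) := by
  rw [Complex.exp_eq_exp_iff_exists_int]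
  exact ⟨t, by rw [h]; push_cast; ring⟩

lemma conj_exp_real' (x : ℝ) :
    (starRingEnd ℂ) (Complex.exp ((x:ℂ) * Complex.I)) = Complex.exp ((((-x):ℝ):ℂ) * Complex.I) := by
  rw [← Complex.exp_conj]
  congr 1
  push_cast
  simp [map_mul, Complex.conj_ofReal, Complex.conj_I]

lemma exp_mul_exp_neg (x : ℝ) :
    Complex.exp ((x:ℂ) * Complex.I) * Complex.exp ((((-x):ℝ):ℂ) * Complex.I) = 1 := by
  rw [← Complex.exp_add]
  have : ((x:ℂ)) * Complex.I + (((-x:ℝ)):ℂ) * Complex.I = 0 := by push_cast; ring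
  rw [this, Complex.exp_zero]

lemma refl_invol (V1 V2 : ℂ) (h : V1 ≠ V2) (z : ℂ) :
    perpBisectorReflection V1 V2 (perpBisectorReflection V1 V2 z) = z := by
  have hu : V2 - V1 ≠ 0 := sub_ne_zero.mpr (Ne.symm h)
  have hne2' : (starRingEnd ℂ) (V2 - V1) ≠ 0 :=
    fun hh => hu (by simpa using congrArg (starRingEnd ℂ) hh)
  have hne2 : (starRingEnd ℂ) V2 - (starRingEnd ℂ) V1 ≠ 0 := by rw [← map_sub]; exact hne2'
  unfold perpBisectorReflection
  have hq : (V2 - V1) / (starRingEnd ℂ) (V2 - V1) * ((starRingEnd ℂ) V2 - (starRingEnd ℂ) V1) = V2 - V1 := by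
    rw [← map_sub, div_mul_cancel₀]
    exact hne2'
  have key : (V1 + V2) / 2 - (V2 - V1) / (starRingEnd ℂ) (V2 - V1) * (starRingEnd ℂ) (z - (V1 + V2) / 2) - (V1 + V2) / 2
      = -((V2 - V1) / (starRingEnd ℂ) (V2 - V1) * (starRingEnd ℂ) (z - (V1 + V2) / 2)) := by ring
  rw [key, map_neg, map_mul, map_div₀, Complex.conj_conj, map_sub, Complex.conj_conj]
  field_simp [hu, hne2]
  ring

lemma perp_symm (V1 V2 : ℂ) : perpBisectorReflection V1 V2 = perpBisectorReflection V2 V1 := by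
  funext z
  unfold perpBisectorReflection
  have h1 : V1 - V2 = -(V2 - V1) := by ring
  rw [h1, map_neg, neg_div_neg_eq]
  ring_nf

lemma refl_formula (O : ℂ) (r : ℝ) (hr : r ≠ 0) (a1 a2 φ : ℝ)
    (hne : Complex.exp ((a1:ℂ) * Complex.I) ≠ Complex.exp ((a2:ℂ) * Complex.I)) :
    perpBisectorReflection (O + (r:ℂ) * Complex.exp ((a1:ℂ) * Complex.I))
        (O + (r:ℂ) * Complex.exp ((a2:ℂ) * Complex.I))
        (O + (r:ℂ) * Complex.exp ((φ:ℂ) * Complex.I))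
      = O + (r:ℂ) * Complex.exp (((a1 + a2 - φ : ℝ):ℂ) * Complex.I) := by
  have hr' : (r:ℂ) ≠ 0 := Complex.ofReal_ne_zero.mpr hr
  have conjA := conj_exp_real' a1
  have conjB := conj_exp_real' a2
  have conjZ := conj_exp_real' φ
  have hA2 := exp_mul_exp_neg a1
  have hB2 := exp_mul_exp_neg a2
  have hZ2 := exp_mul_exp_neg φ
  have hsum : Complex.exp (((a1 + a2 - φ : ℝ):ℂ) * Complex.I)
      = Complex.exp ((a1:ℂ) * Complex.I) * Complex.exp ((a2:ℂ) * Complex.I)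
        * Complex.exp ((((-φ):ℝ):ℂ) * Complex.I) := by
    rw [← Complex.exp_add, ← Complex.exp_add]
    congr 1
    push_cast
    ring
  set A := Complex.exp ((a1:ℂ) * Complex.I)
  set B := Complex.exp ((a2:ℂ) * Complex.I)
  set Z := Complex.exp ((φ:ℂ) * Complex.I)
  set NA := Complex.exp ((((-a1):ℝ):ℂ) * Complex.I)
  set NB := Complex.exp ((((-a2):ℝ):ℂ) * Complex.I)
  set NZ := Complex.exp ((((-φ):ℝ):ℂ) * Complex.I)
  clear_value A B Z NA NB NZ
  have hBA : B - A ≠ 0 := sub_ne_zero.mpr (Ne.symm hne)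
  have hNBA : (r:ℂ) * (NB - NA) ≠ 0 := by
    refine mul_ne_zero hr' (sub_ne_zero.mpr ?_)
    intro hh
    apply hBA
    have : B - A = A * B * (NA - NB) := by linear_combination A * hB2 - B * hA2
    rw [this, hh]
    ring
  have hu : (O + (r:ℂ) * B) - (O + (r:ℂ) * A) = (r:ℂ) * (B - A) := by ring
  have hcu : (starRingEnd ℂ) ((O + (r:ℂ) * B) - (O + (r:ℂ) * A)) = (r:ℂ) * (NB - NA) := by
    rw [hu, map_mul, map_sub, conjA, conjB, Complex.conj_ofReal]
  have hquot : ((O + (r:ℂ) * B) - (O + (r:ℂ) * A)) / (starRingEnd ℂ) ((O + (r:ℂ) * B) - (O + (r:ℂ) * A)) = -(A * B) := by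
    rw [hcu, hu, div_eq_iff hNBA]
    linear_combination ((r:ℂ) * A) * hB2 - ((r:ℂ) * B) * hA2
  unfold perpBisectorReflection
  rw [hquot, hsum]
  simp only [map_sub, map_add, map_mul, map_div₀, Complex.conj_ofReal, conjA, conjZ, conjB, map_ofNat]
  linear_combination (-(r:ℂ)/2 * A) * hB2 + (-(r:ℂ)/2 * B) * hA2

lemma int_small (N : ℤ) (hN : 0 < N) (u c : ℤ) (h : u = N * c) (h1 : -N < u) (h2 : u < N) : u = 0 := by
  have hc1 : c < 1 := by nlinarith
  have hc2 : -1 < c := by nlinarith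
  have hc : c = 0 := by omega
  rw [h, hc, mul_zero]

lemma coprime_int (n m : ℕ) (hgcd : Nat.gcd n m = 1) : IsCoprime (n:ℤ) (m:ℤ) := by
  rw [Int.isCoprime_iff_gcd_eq_one]
  simpa using hgcd

lemma mem_regular (N : ℕ) (hN : 0 < N) (O : ℂ) (r θ : ℝ) (x : ℝ) (K T : ℤ)
    (hx : x = θ + 2 * Real.pi * K / N + 2 * Real.pi * T) :
    O + (r:ℂ) * Complex.exp ((x:ℂ) * Complex.I) ∈ regularVerts N O r θ := by
  have hN' : (N:ℝ) ≠ 0 := Nat.cast_ne_zero.mpr hN.ne'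
  have hNZ : (0:ℤ) < (N:ℤ) := by exact_mod_cast hN
  have h0 : 0 ≤ K % N := Int.emod_nonneg K hNZ.ne'
  have h1 : K % N < N := Int.emod_lt_of_pos K hNZ
  have hKd : (K:ℝ) = (N:ℝ) * ((K / N : ℤ):ℝ) + ((K % N : ℤ):ℝ) := by
    exact_mod_cast congrArg (Int.cast : ℤ → ℝ) (Int.mul_ediv_add_emod K N).symm
  have hcast : (((K % N).toNat : ℕ) : ℝ) = ((K % N : ℤ) : ℝ) := by
    exact_mod_cast Int.toNat_of_nonneg h0
  have h2 : (K:ℝ) / N - ((K % N : ℤ):ℝ)/N = ((K / N : ℤ):ℝ) := by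
    rw [div_sub_div_same,
      show (K:ℝ) - ((K % N : ℤ):ℝ) = (N:ℝ) * ((K / N : ℤ):ℝ) from by linarith [hKd]]
    exact mul_div_cancel_left₀ _ hN'
  refine ⟨(K % N).toNat, by omega, ?_⟩
  have key : x = (θ + 2 * Real.pi * ((K % N).toNat) / N) + 2 * Real.pi * ((K / N + T : ℤ):ℝ) := by
    rw [hx, hcast]
    push_cast
    linear_combination (2 * Real.pi) * h2
  have hexp := exp_eq_of x (θ + 2 * Real.pi * ((K % N).toNat) / N) (K / N + T) (by exact_mod_cast key)
  rw [hexp]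

lemma contra_main (n m : ℕ) (hn : 2 ≤ n) (hm : 2 ≤ m) (hgcd : Nat.gcd n m = 1)
    (α : ℝ) (hα0 : 0 < α) (hαπ : α < Real.pi) (A B : ℤ)
    (hA : (n:ℝ) * (Real.pi - α) = 2 * Real.pi * A)
    (hB : (m:ℝ) * (Real.pi + α) = 2 * Real.pi * B) : False := by
  have hπ := Real.pi_pos
  have hn' : (0:ℝ) < n := by positivity
  have hm' : (0:ℝ) < m := by positivity
  have hApos : 0 < A := by
    have h1 : (0:ℝ) < 2 * Real.pi * A := by nlinarith
    have h2 : (0:ℝ) < (A:ℝ) := by nlinarith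
    exact_mod_cast h2
  have hAlt : A < n := by
    have h1 : 2 * Real.pi * (A:ℝ) < 2 * Real.pi * (n:ℝ) := by nlinarith
    have h2 : (A:ℝ) < n := by nlinarith
    exact_mod_cast h2
  have hsum : (m:ℝ) * A + (n:ℝ) * B = (m:ℝ) * n := by
    have h1 : 2 * Real.pi * ((m:ℝ) * A + (n:ℝ) * B) = 2 * Real.pi * ((m:ℝ) * n) := by
      nlinarith [hA, hB]
    have h2 := mul_left_cancel₀ (by positivity : (2 * Real.pi : ℝ) ≠ 0) h1
    linarith
  have hsumZ : (m:ℤ) * A + (n:ℤ) * B = (m:ℤ) * n := by exact_mod_cast hsum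
  have hdvd : (n:ℤ) ∣ (m:ℤ) * A := ⟨(m:ℤ) - B, by linarith [hsumZ]⟩
  have hdvdA : (n:ℤ) ∣ A := (coprime_int n m hgcd).dvd_of_dvd_mul_left hdvd
  have := Int.le_of_dvd hApos hdvdA
  omega

/-- Same-orientation exclusion: if two vertex–pairs give gaps of the same angle with
the same orientation, the second coordinates agree. -/
lemma excl (N M : ℕ) (hN : 0 < N) (hM : 0 < M) (hgcd : Nat.gcd M N = 1)
    (φ1 φ2 α : ℝ) (u1 u2 v1 v2 : ℕ) (hv1 : v1 < M) (hv2 : v2 < M) (t1 t2 : ℤ)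
    (h1 : φ2 + 2 * Real.pi * v1 / M = φ1 + 2 * Real.pi * u1 / N + α + 2 * Real.pi * t1)
    (h2 : φ2 + 2 * Real.pi * v2 / M = φ1 + 2 * Real.pi * u2 / N + α + 2 * Real.pi * t2) :
    v1 = v2 := by
  have hπ := Real.pi_pos
  have hN' : (N:ℝ) ≠ 0 := Nat.cast_ne_zero.mpr hN.ne'
  have hM' : (M:ℝ) ≠ 0 := Nat.cast_ne_zero.mpr hM.ne'
  have e0 : 2 * Real.pi * ((v1:ℝ) - v2) / M = 2 * Real.pi * ((u1:ℝ) - u2) / N + 2 * Real.pi * ((t1:ℝ) - t2) := by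
    rw [mul_sub, mul_sub, mul_sub, sub_div, sub_div]
    linear_combination h1 - h2
  have eY : 2 * Real.pi * ((u1:ℝ) - u2) / N
      = 2 * Real.pi * ((v1:ℝ) - v2) / M - 2 * Real.pi * ((t1:ℝ) - t2) := by linarith [e0]
  rw [div_eq_iff hN'] at eY
  have e2 : 2 * Real.pi * ((v1:ℝ) - v2) / M * N
      = 2 * Real.pi * ((u1:ℝ) - u2) + 2 * Real.pi * ((t1:ℝ) - t2) * N := by
    linear_combination -eY
  rw [div_mul_eq_mul_div, div_eq_iff hM'] at e2
  have e3 : 2 * Real.pi * (((v1:ℝ) - v2) * N)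
      = 2 * Real.pi * ((((u1:ℝ) - u2) + ((t1:ℝ) - t2) * N) * M) := by linear_combination e2
  have e4 := mul_left_cancel₀ (by positivity : (2 * Real.pi : ℝ) ≠ 0) e3
  have eZ : (((v1:ℤ) - v2) * N) = ((((u1:ℤ) - u2) + ((t1:ℤ) - t2) * N) * M) := by exact_mod_cast e4
  have hdvd : (M:ℤ) ∣ ((v1:ℤ) - v2) * N := ⟨(((u1:ℤ) - u2) + ((t1:ℤ) - t2) * N), by linarith [eZ]⟩
  have hdvd2 : (M:ℤ) ∣ ((v1:ℤ) - v2) := (coprime_int M N hgcd).dvd_of_dvd_mul_right hdvd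
  obtain ⟨c, hc⟩ := hdvd2
  have hz : ((v1:ℤ) - v2) = 0 := by
    refine int_small (M:ℤ) (by exact_mod_cast hM) _ c hc ?_ ?_ <;> omega
  omega

lemma master (n m : ℕ) (hn : 2 ≤ n) (hm : 2 ≤ m) (hgcd : Nat.gcd n m = 1)
    (O : ℂ) (r : ℝ) (hr : 0 < r) (θ ψ α : ℝ) (hα0 : 0 < α) (hαπ : α < Real.pi)
    (k1 k2 j1 j2 : ℕ) (t1 t2 : ℤ)
    (ht1 : ψ + 2 * Real.pi * j1 / m = θ + 2 * Real.pi * k1 / n + α + 2 * Real.pi * t1)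
    (ht2 : θ + 2 * Real.pi * k2 / n = ψ + 2 * Real.pi * j2 / m + α + 2 * Real.pi * t2)
    (hne : Complex.exp (((θ + 2 * Real.pi * k1 / n : ℝ):ℂ) * Complex.I)
         ≠ Complex.exp (((θ + 2 * Real.pi * k2 / n : ℝ):ℂ) * Complex.I)) :
    perpBisectorReflection
        (O + (r:ℂ) * Complex.exp (((θ + 2 * Real.pi * k1 / n : ℝ):ℂ) * Complex.I))
        (O + (r:ℂ) * Complex.exp (((θ + 2 * Real.pi * k2 / n : ℝ):ℂ) * Complex.I)) ''
        (regularVerts n O r θ ∪ regularVerts m O r ψ)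
      = regularVerts n O r θ ∪ regularVerts m O r ψ ∧
    (O + (r:ℂ) * Complex.exp (((θ + 2 * Real.pi * k1 / n + α / 2 : ℝ):ℂ) * Complex.I))
      + (O + (r:ℂ) * Complex.exp (((ψ + 2 * Real.pi * j2 / m + α / 2 : ℝ):ℂ) * Complex.I)) ≠ 2 * O := by
  have hπ := Real.pi_pos
  have hn0 : 0 < n := by omega
  have hm0 : 0 < m := by omega
  have hn' : (n:ℝ) ≠ 0 := Nat.cast_ne_zero.mpr hn0.ne'
  have hm' : (m:ℝ) ≠ 0 := Nat.cast_ne_zero.mpr hm0.ne'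
  have hrne : r ≠ 0 := hr.ne'
  set a1 := θ + 2 * Real.pi * k1 / n with ha1
  set a2 := θ + 2 * Real.pi * k2 / n with ha2
  set b2 := ψ + 2 * Real.pi * j2 / m with hb2
  constructor
  · -- the reflection maps P ∪ Q onto itself
    have hfwd : ∀ z ∈ regularVerts n O r θ ∪ regularVerts m O r ψ,
        perpBisectorReflection
          (O + (r:ℂ) * Complex.exp ((a1:ℂ) * Complex.I))
          (O + (r:ℂ) * Complex.exp ((a2:ℂ) * Complex.I)) z
        ∈ regularVerts n O r θ ∪ regularVerts m O r ψ := by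
      rintro z (⟨k, hk, rfl⟩ | ⟨j, hj, rfl⟩)
      · rw [refl_formula O r hrne a1 a2 _ hne]
        left
        apply mem_regular n hn0 O r θ _ ((k1:ℤ) + k2 - k) 0
        rw [ha1, ha2]
        push_cast
        ring
      · rw [refl_formula O r hrne a1 a2 _ hne]
        right
        apply mem_regular m hm0 O r ψ _ ((j1:ℤ) + j2 - j) (t2 - t1)
        push_cast
        linear_combination ht2 - ht1 - hb2
    apply Set.Subset.antisymm
    · rintro w ⟨z, hz, rfl⟩
      exact hfwd z hz
    · intro z hz
      have hV12 : O + (r:ℂ) * Complex.exp ((a1:ℂ) * Complex.I)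
          ≠ O + (r:ℂ) * Complex.exp ((a2:ℂ) * Complex.I) :=
        fun hh => hne (mul_left_cancel₀ (Complex.ofReal_ne_zero.mpr hrne) (add_left_cancel hh))
      exact ⟨_, hfwd z hz, refl_invol _ _ hV12 z⟩
  · -- the midpoints are not antipodal
    intro heq
    have h0 : (r:ℂ) * (Complex.exp (((a1 + α / 2 : ℝ):ℂ) * Complex.I)
        + Complex.exp (((b2 + α / 2 : ℝ):ℂ) * Complex.I)) = 0 := by
      linear_combination heq
    have hsum0 : Complex.exp (((a1 + α / 2 : ℝ):ℂ) * Complex.I)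
        + Complex.exp (((b2 + α / 2 : ℝ):ℂ) * Complex.I) = 0 :=
      (mul_eq_zero.mp h0).resolve_left (Complex.ofReal_ne_zero.mpr hrne)
    have hexp : Complex.exp (((b2 + α / 2 + Real.pi : ℝ):ℂ) * Complex.I)
        = - Complex.exp (((b2 + α / 2 : ℝ):ℂ) * Complex.I) := by
      rw [show (((b2 + α / 2 + Real.pi : ℝ)):ℂ) * Complex.I
          = ((b2 + α / 2 : ℝ):ℂ) * Complex.I + (Real.pi:ℂ) * Complex.I from by push_cast; ring,
        Complex.exp_add, Complex.exp_pi_mul_I]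
      ring
    have heq2 : Complex.exp (((a1 + α / 2 : ℝ):ℂ) * Complex.I)
        = Complex.exp (((b2 + α / 2 + Real.pi : ℝ):ℂ) * Complex.I) := by
      rw [hexp]
      linear_combination hsum0
    obtain ⟨t3, ht3⟩ := exp_angle_eq heq2
    have hant : a1 = b2 + Real.pi + 2 * Real.pi * t3 := by linear_combination ht3
    have hDiv1 : 2 * Real.pi * ((k2:ℝ) - k1) / n = α - Real.pi + 2 * Real.pi * ((t2:ℝ) - t3) := by
      rw [mul_sub, sub_div]
      linear_combination ht2 - hant - ha2 + ha1
    rw [div_eq_iff hn'] at hDiv1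
    have hA : (n:ℝ) * (Real.pi - α) = 2 * Real.pi * (((k1:ℤ) - k2 + n * (t2 - t3) : ℤ):ℝ) := by
      push_cast
      linear_combination hDiv1
    have hDiv2 : 2 * Real.pi * ((j1:ℝ) - j2) / m = Real.pi + α + 2 * Real.pi * ((t1:ℝ) + t3) := by
      rw [mul_sub, sub_div]
      linear_combination ht1 + hant + hb2
    rw [div_eq_iff hm'] at hDiv2
    have hB : (m:ℝ) * (Real.pi + α) = 2 * Real.pi * (((j1:ℤ) - j2 - m * (t1 + t3) : ℤ):ℝ) := by
      push_cast
      linear_combination -hDiv2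
    exact contra_main n m hn hm hgcd α hα0 hαπ _ _ (by exact_mod_cast hA) (by exact_mod_cast hB)


theorem stmt2 (n m : ℕ) (hn : 2 ≤ n) (hm : 2 ≤ m) (hgcd : Nat.gcd n m = 1)
    (O : ℂ) (r : ℝ) (hr : 0 < r) (P Q : Set ℂ)
    (hP : IsRegularNGon n O r P) (hQ : IsRegularNGon m O r Q)
    (V1 W1 V2 W2 M1 M2 : ℂ) (α : ℝ)
    (hV1 : V1 ∈ P) (hW1 : W1 ∈ Q) (hV2 : V2 ∈ P) (hW2 : W2 ∈ Q)
    (hVV : V1 ≠ V2) (hWW : W1 ≠ W2)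
    (hα0 : 0 < α) (hαπ : α < Real.pi)
    (h1 : IsGapWithMid (P ∪ Q) O V1 W1 α M1)
    (h2 : IsGapWithMid (P ∪ Q) O V2 W2 α M2) :
    perpBisectorReflection V1 V2 '' (P ∪ Q) = P ∪ Q ∧ M1 + M2 ≠ 2 * O := by
  obtain ⟨θ, rfl⟩ := hP
  obtain ⟨ψ, rfl⟩ := hQ
  obtain ⟨k1, hk1, hV1e⟩ := hV1
  obtain ⟨k2, hk2, hV2e⟩ := hV2
  obtain ⟨j1, hj1, hW1e⟩ := hW1
  obtain ⟨j2, hj2, hW2e⟩ := hW2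
  have hn0 : 0 < n := by omega
  have hm0 : 0 < m := by omega
  have hrne : r ≠ 0 := ne_of_gt hr
  obtain ⟨-, -, -, -, -, hc1⟩ := h1
  obtain ⟨-, -, -, -, -, hc2⟩ := h2
  rcases hc1 with ⟨hr1, -, hM1⟩ | ⟨hr1, -, hM1⟩ <;>
    rcases hc2 with ⟨hr2, -, hM2⟩ | ⟨hr2, -, hM2⟩
  · -- both counterclockwise: impossible
    rw [hV1e, rot_eq] at hr1
    rw [hV2e, rot_eq] at hr2
    obtain ⟨t1, ht1⟩ := ang_of_eq O r hrne _ _ (hW1e.symm.trans hr1)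
    obtain ⟨t2, ht2⟩ := ang_of_eq O r hrne _ _ (hW2e.symm.trans hr2)
    have hj12 : j1 = j2 :=
      excl n m hn0 hm0 (by rw [Nat.gcd_comm]; exact hgcd) θ ψ α k1 k2 j1 j2 hj1 hj2 t1 t2 ht1 ht2
    exact (hWW (by rw [hW1e, hW2e, hj12])).elim
  · -- first ccw, second cw: main case
    rw [hV1e, rot_eq] at hr1
    rw [hW2e, rot_eq] at hr2
    obtain ⟨t1, ht1⟩ := ang_of_eq O r hrne _ _ (hW1e.symm.trans hr1)
    obtain ⟨t2, ht2⟩ := ang_of_eq O r hrne _ _ (hV2e.symm.trans hr2)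
    have hne : Complex.exp (((θ + 2 * Real.pi * k1 / n : ℝ):ℂ) * Complex.I)
        ≠ Complex.exp (((θ + 2 * Real.pi * k2 / n : ℝ):ℂ) * Complex.I) := by
      intro hh
      exact hVV (by rw [hV1e, hV2e, hh])
    rw [hV1e, rot_eq] at hM1
    rw [hW2e, rot_eq] at hM2
    have H := master n m hn hm hgcd O r hr θ ψ α hα0 hαπ k1 k2 j1 j2 t1 t2 ht1 ht2 hne
    constructor
    · rw [hV1e, hV2e]
      exact H.1
    · rw [hM1, hM2]
      exact H.2
  · -- first cw, second ccw: mirror main case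
    rw [hW1e, rot_eq] at hr1
    rw [hV2e, rot_eq] at hr2
    obtain ⟨t1, ht1⟩ := ang_of_eq O r hrne _ _ (hV1e.symm.trans hr1)
    obtain ⟨t2, ht2⟩ := ang_of_eq O r hrne _ _ (hW2e.symm.trans hr2)
    have hne : Complex.exp (((θ + 2 * Real.pi * k2 / n : ℝ):ℂ) * Complex.I)
        ≠ Complex.exp (((θ + 2 * Real.pi * k1 / n : ℝ):ℂ) * Complex.I) := by
      intro hh
      exact hVV (by rw [hV1e, hV2e, hh])
    rw [hW1e, rot_eq] at hM1
    rw [hV2e, rot_eq] at hM2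
    have H := master n m hn hm hgcd O r hr θ ψ α hα0 hαπ k2 k1 j2 j1 t2 t1 ht2 ht1 hne
    constructor
    · rw [hV1e, hV2e, perp_symm]
      exact H.1
    · rw [hM1, hM2, add_comm]
      exact H.2
  · -- both clockwise: impossible
    rw [hW1e, rot_eq] at hr1
    rw [hW2e, rot_eq] at hr2
    obtain ⟨t1, ht1⟩ := ang_of_eq O r hrne _ _ (hV1e.symm.trans hr1)
    obtain ⟨t2, ht2⟩ := ang_of_eq O r hrne _ _ (hV2e.symm.trans hr2)
    have hk12 : k1 = k2 :=
      excl m n hm0 hn0 hgcd ψ θ α j1 j2 k1 k2 hk1 hk2 t1 t2 ht1 ht2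
    exact (hVV (by rw [hV1e, hV2e, hk12])).elim

end
end

section
/- Let n, m ≥ 2 be integers with gcd(n, m) = 1, let O ∈ ℂ and r > 0, and let P and Q be the vertex sets of a regular n-gon and of a regular m-gon, respectively, both inscribed in the circle with center O and radius r. Then there do not exist three pairwise distinct pairs (V1, W1), (V2, W2), (V3, W3) ∈ P × Q such that each pair (Vi, Wi) is adjacent in P ∪ Q and the three gap angles of these pairs are all equal. -/
noncomputable section

/-- `(V, W)` is an adjacent pair of the set `S` (contained in a circle centered
at `O`) with gap angle `α`: either the open arc of angular measure `α` going
counterclockwise from `V` ends at `W` and contains no point of `S`, or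
symmetrically with `V` and `W` interchanged. -/
def IsGap (S : Set ℂ) (O V W : ℂ) (α : ℝ) : Prop :=
  V ∈ S ∧ W ∈ S ∧ V ≠ W ∧ 0 < α ∧ α < 2 * Real.pi ∧
    ((W = rotAbout O α V ∧ ∀ t : ℝ, 0 < t → t < α → rotAbout O t V ∉ S) ∨
      (V = rotAbout O α W ∧ ∀ t : ℝ, 0 < t → t < α → rotAbout O t W ∉ S))

/-- Rotating a point of the circle by angle `α` adds `α` to its phase. -/
lemma rot_point (O : ℂ) (r A α : ℝ) :
    rotAbout O α (O + (r:ℂ) * Complex.exp ((A:ℂ) * Complex.I))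
      = O + (r:ℂ) * Complex.exp (((A + α : ℝ):ℂ) * Complex.I) := by
  simp only [rotAbout]
  push_cast
  rw [add_mul, Complex.exp_add]
  ring

/-- Two points of a circle of positive radius are equal iff their phases differ
by an integer multiple of `2π`. -/
lemma exp_point_eq {r : ℝ} (hr : 0 < r) {O : ℂ} {A B : ℝ}
    (h : O + (r:ℂ) * Complex.exp ((A:ℂ) * Complex.I)
       = O + (r:ℂ) * Complex.exp ((B:ℂ) * Complex.I)) :
    ∃ N : ℤ, A = B + 2 * Real.pi * N := by
  have hr' : (r:ℂ) ≠ 0 := by exact_mod_cast hr.ne'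
  have hexp : Complex.exp ((A:ℂ) * Complex.I) = Complex.exp ((B:ℂ) * Complex.I) :=
    mul_left_cancel₀ hr' (add_left_cancel h)
  rw [Complex.exp_eq_exp_iff_exists_int] at hexp
  obtain ⟨N, hN⟩ := hexp
  refine ⟨N, ?_⟩
  have h2 : (A:ℂ) * Complex.I = ((B:ℝ) + 2 * Real.pi * (N:ℝ) : ℝ) * Complex.I := by
    push_cast
    linear_combination hN
  have h3 : (A:ℂ) = ((B:ℝ) + 2 * Real.pi * (N:ℝ) : ℝ) := mul_right_cancel₀ Complex.I_ne_zero h2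
  exact_mod_cast h3

/-- Coprimality forces the indices of two gap relations with the same angle to agree. -/
lemma idx_eq (n m : ℕ) (hn : 2 ≤ n) (hm : 2 ≤ m) (hgcd : Nat.gcd n m = 1)
    (θP θQ α : ℝ) (k k' j j' : ℕ) (hk : k < n) (hk' : k' < n) (hj : j < m) (hj' : j' < m)
    (N N' : ℤ)
    (e1 : θQ + 2 * Real.pi * j / m = θP + 2 * Real.pi * k / n + α + 2 * Real.pi * N)
    (e2 : θQ + 2 * Real.pi * j' / m = θP + 2 * Real.pi * k' / n + α + 2 * Real.pi * N') :
    k = k' ∧ j = j' := by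
  have hn0 : (n:ℝ) ≠ 0 := by positivity
  have hm0 : (m:ℝ) ≠ 0 := by positivity
  have hπ : (2 * Real.pi : ℝ) ≠ 0 := by positivity
  have key2 : 2 * Real.pi * (((j:ℝ) - j') * n) =
      2 * Real.pi * (((k:ℝ) - k') * m + ((N:ℝ) - N') * n * m) := by
    field_simp at e1 e2
    linear_combination (e1 - e2)
  have key : ((j:ℝ) - j') * n = ((k:ℝ) - k') * m + ((N:ℝ) - N') * n * m :=
    mul_left_cancel₀ hπ key2
  have keyZ : ((j:ℤ) - j') * n = ((k:ℤ) - k') * m + ((N:ℤ) - N') * n * m := by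
    exact_mod_cast key
  have hmZ : (0:ℤ) < m := by exact_mod_cast (by omega : 0 < m)
  have hnZ : (0:ℤ) < n := by exact_mod_cast (by omega : 0 < n)
  have hco : IsCoprime (m:ℤ) (n:ℤ) :=
    Nat.isCoprime_iff_coprime.mpr (Nat.Coprime.symm hgcd)
  have hdvd : (m:ℤ) ∣ ((j:ℤ) - j') := by
    refine hco.dvd_of_dvd_mul_right ⟨((k:ℤ) - k') + ((N:ℤ) - N') * n, ?_⟩
    linear_combination keyZ
  have hj0 : (j:ℤ) - j' = 0 := by
    refine Int.eq_zero_of_abs_lt_dvd hdvd ?_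
    rw [abs_lt]; omega
  have hjj : j = j' := by omega
  subst hjj
  have hk0 : (k:ℤ) - k' = 0 := by
    have hdvd2 : (n:ℤ) ∣ ((k:ℤ) - k') := by
      refine ⟨-(((N:ℤ) - N')), ?_⟩
      have h5 : ((k:ℤ) - k') * m = ((n:ℤ) * -(((N:ℤ) - N'))) * m := by linear_combination -keyZ
      exact mul_right_cancel₀ (by omega : (m:ℤ) ≠ 0) h5
    exact Int.eq_zero_of_abs_lt_dvd hdvd2 (by rw [abs_lt]; omega)
  exact ⟨by omega, rfl⟩

/-- Key uniqueness: for coprime `n`, `m`, the rotation angle `α` determines the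
pair `(V, W)` with `V` in the `n`-gon, `W` in the `m`-gon and `W = rot_α V`. -/
lemma pair_unique (n m : ℕ) (hn : 2 ≤ n) (hm : 2 ≤ m) (hgcd : Nat.gcd n m = 1)
    (O : ℂ) (r : ℝ) (hr : 0 < r) (θP θQ α : ℝ) {V V' W W' : ℂ}
    (hV : V ∈ regularVerts n O r θP) (hV' : V' ∈ regularVerts n O r θP)
    (hW : W ∈ regularVerts m O r θQ) (hW' : W' ∈ regularVerts m O r θQ)
    (h1 : W = rotAbout O α V) (h2 : W' = rotAbout O α V') :
    V = V' ∧ W = W' := by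
  obtain ⟨k, hk, rfl⟩ := hV
  obtain ⟨k', hk', rfl⟩ := hV'
  obtain ⟨j, hj, rfl⟩ := hW
  obtain ⟨j', hj', rfl⟩ := hW'
  rw [rot_point] at h1 h2
  obtain ⟨N, hN⟩ := exp_point_eq hr h1
  obtain ⟨N', hN'⟩ := exp_point_eq hr h2
  obtain ⟨hkk, hjj⟩ := idx_eq n m hn hm hgcd θP θQ α k k' j j' hk hk' hj hj' N N' hN hN'
  subst hkk; subst hjj
  exact ⟨rfl, rfl⟩

theorem stmt3 (n m : ℕ) (hn : 2 ≤ n) (hm : 2 ≤ m) (hgcd : Nat.gcd n m = 1)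
    (O : ℂ) (r : ℝ) (hr : 0 < r) (P Q : Set ℂ)
    (hP : IsRegularNGon n O r P) (hQ : IsRegularNGon m O r Q) :
    ¬ ∃ (V1 W1 V2 W2 V3 W3 : ℂ) (α : ℝ),
        V1 ∈ P ∧ W1 ∈ Q ∧ V2 ∈ P ∧ W2 ∈ Q ∧ V3 ∈ P ∧ W3 ∈ Q ∧
        (V1, W1) ≠ (V2, W2) ∧ (V1, W1) ≠ (V3, W3) ∧ (V2, W2) ≠ (V3, W3) ∧
        IsGap (P ∪ Q) O V1 W1 α ∧ IsGap (P ∪ Q) O V2 W2 α ∧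
        IsGap (P ∪ Q) O V3 W3 α := by
  obtain ⟨θP, rfl⟩ := hP
  obtain ⟨θQ, rfl⟩ := hQ
  rintro ⟨V1, W1, V2, W2, V3, W3, α, hV1, hW1, hV2, hW2, hV3, hW3, h12, h13, h23, g1, g2, g3⟩
  have hgcd' : Nat.gcd m n = 1 := Nat.Coprime.symm hgcd
  -- "forward" gaps determine the pair; likewise "backward" gaps.
  have fwd : ∀ {V V' W W' : ℂ}, V ∈ regularVerts n O r θP → V' ∈ regularVerts n O r θP →
      W ∈ regularVerts m O r θQ → W' ∈ regularVerts m O r θQ →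
      W = rotAbout O α V → W' = rotAbout O α V' → (V, W) = (V', W') := by
    intro V V' W W' a b c d e f
    obtain ⟨h1, h2⟩ := pair_unique n m hn hm hgcd O r hr θP θQ α a b c d e f
    rw [h1, h2]
  have bwd : ∀ {V V' W W' : ℂ}, V ∈ regularVerts n O r θP → V' ∈ regularVerts n O r θP →
      W ∈ regularVerts m O r θQ → W' ∈ regularVerts m O r θQ →
      V = rotAbout O α W → V' = rotAbout O α W' → (V, W) = (V', W') := by
    intro V V' W W' a b c d e f
    obtain ⟨h1, h2⟩ := pair_unique m n hm hn hgcd' O r hr θQ θP α c d a b e f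
    rw [h1, h2]
  obtain ⟨-, -, -, -, -, d1⟩ := g1
  obtain ⟨-, -, -, -, -, d2⟩ := g2
  obtain ⟨-, -, -, -, -, d3⟩ := g3
  rcases d1 with ⟨e1, -⟩ | ⟨e1, -⟩ <;> rcases d2 with ⟨e2, -⟩ | ⟨e2, -⟩ <;>
      rcases d3 with ⟨e3, -⟩ | ⟨e3, -⟩
  · exact h12 (fwd hV1 hV2 hW1 hW2 e1 e2)
  · exact h12 (fwd hV1 hV2 hW1 hW2 e1 e2)
  · exact h13 (fwd hV1 hV3 hW1 hW3 e1 e3)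
  · exact h23 (bwd hV2 hV3 hW2 hW3 e2 e3)
  · exact h23 (fwd hV2 hV3 hW2 hW3 e2 e3)
  · exact h13 (bwd hV1 hV3 hW1 hW3 e1 e3)
  · exact h12 (bwd hV1 hV2 hW1 hW2 e1 e2)
  · exact h12 (bwd hV1 hV2 hW1 hW2 e1 e2)
end
end

section
/- (Solution of the First Step Problem.) For every n ≥ 3 there exists a function B̃ assigning a point of ℂ to every n-element subset S of ℂ whose points all lie on a common circle, such that for every such S, contained in the circle c with center O and radius r > 0, the following hold: (1) B̃(S) lies on c or B̃(S) = O; (2) B̃(S) = O if and only if some nontrivial rotation about O maps S onto itself; (3) B̃(f(S)) = f(B̃(S)) for every similarity f of the plane. -/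
noncomputable section

open Polynomial Complex
open scoped Classical

/-- A similarity of the plane: a bijection multiplying all distances by a fixed
positive ratio. -/
def IsSimilarity (f : ℂ → ℂ) : Prop :=
  Function.Bijective f ∧ ∃ r : ℝ, 0 < r ∧
    ∀ z w : ℂ, ‖f z - f w‖ = r * ‖z - w‖

/-! ### Auxiliary lemmas -/

lemma similarity_form {f : ℂ → ℂ} (hf : IsSimilarity f) :
    ∃ a b : ℂ, a ≠ 0 ∧ ((∀ z, f z = a * z + b) ∨ (∀ z, f z = a * (starRingEnd ℂ) z + b)) := by
  obtain ⟨hbij, r, hr, hd⟩ := hf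
  have hr0 : (r : ℂ) ≠ 0 := by exact_mod_cast hr.ne'
  set g : ℂ → ℂ := fun z => (f z - f 0) / r with hg
  have hfg : ∀ z, f z = r * g z + f 0 := by
    intro z; simp only [hg]; field_simp; ring
  have hgbij : Function.Bijective g := by
    constructor
    · intro x y hxy
      apply hbij.1
      have : (r:ℂ) * g x + f 0 = r * g y + f 0 := by rw [hxy]
      rw [← hfg, ← hfg] at this; exact this
    · intro w
      obtain ⟨z, hz⟩ := hbij.2 (r * w + f 0)
      refine ⟨z, ?_⟩
      simp only [hg, hz]
      field_simp
      ring
  have hgiso : Isometry g := by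
    rw [isometry_iff_dist_eq]
    intro x y
    simp only [Complex.dist_eq, hg]
    rw [div_sub_div_same, norm_div]
    have : f x - f 0 - (f y - f 0) = f x - f y := by ring
    rw [this, hd]
    rw [Complex.norm_real, Real.norm_of_nonneg hr.le]
    field_simp
  have hg0 : g 0 = 0 := by simp [hg]
  let e : ℂ ≃ᵢ ℂ := ⟨Equiv.ofBijective g hgbij, hgiso⟩
  have he : (e : ℂ → ℂ) = g := rfl
  let lin := e.toRealLinearIsometryEquivOfMapZero (by simpa [he] using hg0)
  have hlin : ∀ z, lin z = g z := by
    intro z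
    have := IsometryEquiv.coe_toRealLinearIsometryEquivOfMapZero e (by simpa [he] using hg0)
    rw [this]; rfl
  obtain ⟨a, ha | ha⟩ := linear_isometry_complex lin
  · refine ⟨r * a, f 0, mul_ne_zero hr0 a.coe_ne_zero, Or.inl fun z => ?_⟩
    have : g z = a * z := by rw [← hlin, ha, rotation_apply]
    rw [hfg z, this]; ring
  · refine ⟨r * a, f 0, mul_ne_zero hr0 a.coe_ne_zero, Or.inr fun z => ?_⟩
    have : g z = a * (starRingEnd ℂ) z := by
      rw [← hlin, ha]
      simp [LinearIsometryEquiv.trans_apply, rotation_apply, conjLIE_apply]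
    rw [hfg z, this]; ring

lemma circle_unique {S : Set ℂ} (h3 : 3 ≤ S.ncard) {O₁ O₂ : ℂ} {r₁ r₂ : ℝ}
    (h₁ : ∀ z ∈ S, ‖z - O₁‖ = r₁)
    (h₂ : ∀ z ∈ S, ‖z - O₂‖ = r₂) : O₁ = O₂ ∧ r₁ = r₂ := by
  have hne : S.Nonempty := by
    rcases Set.eq_empty_or_nonempty S with h | h
    · simp [h, Set.ncard_empty] at h3
    · exact h
  have hOeq : O₁ = O₂ := by
    by_contra hO
    set w : ℂ := O₂ - O₁ with hw
    have hw0 : w ≠ 0 := sub_ne_zero.mpr (Ne.symm hO)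
    have hnsq : normSq w ≠ 0 := by
      simpa using (normSq_pos.mpr hw0).ne'
    have key : ∀ z ∈ S, 2 * (z * (starRingEnd ℂ) w).re
        = r₁^2 - r₂^2 - normSq O₁ + normSq O₂ := by
      intro z hz
      have e₁ : normSq (z - O₁) = r₁ ^ 2 := by
        rw [← Complex.sq_norm, h₁ z hz]
      have e₂ : normSq (z - O₂) = r₂ ^ 2 := by
        rw [← Complex.sq_norm, h₂ z hz]
      rw [normSq_sub] at e₁ e₂
      have : (z * (starRingEnd ℂ) w).re
          = (z * (starRingEnd ℂ) O₂).re - (z * (starRingEnd ℂ) O₁).re := by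
        rw [hw, map_sub, mul_sub, sub_re]
      rw [this]; linarith
    have orth : ∀ z ∈ S, ∀ z' ∈ S, ((z - z') * (starRingEnd ℂ) w).re = 0 := by
      intro z hz z' hz'
      have : ((z - z') * (starRingEnd ℂ) w).re
          = (z * (starRingEnd ℂ) w).re - (z' * (starRingEnd ℂ) w).re := by
        rw [sub_mul, sub_re]
      rw [this]
      have := key z hz; have := key z' hz'; linarith
    have rep : ∀ ζ : ℂ, (ζ * (starRingEnd ℂ) w).re = 0 →
        ζ = (((ζ * (starRingEnd ℂ) w).im / normSq w : ℝ) : ℂ) * (I * w) := by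
      intro ζ hζ
      set s : ℝ := (ζ * (starRingEnd ℂ) w).im with hs
      have h : ζ * (starRingEnd ℂ) w = (s : ℂ) * I := by
        conv_lhs => rw [← re_add_im (ζ * (starRingEnd ℂ) w)]
        rw [hζ, ← hs]; simp
      have hmul : ζ * ((starRingEnd ℂ) w * w) = (s : ℂ) * I * w := by
        rw [← mul_assoc, h]
      have hcw : (starRingEnd ℂ) w * w = (normSq w : ℂ) := by
        rw [mul_comm, mul_conj]
      rw [hcw] at hmul
      have h0 : (normSq w : ℂ) ≠ 0 := by exact_mod_cast hnsq
      rw [ofReal_div, div_mul_eq_mul_div, eq_div_iff h0]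
      linear_combination hmul
    obtain ⟨t, hts, htc⟩ := Set.exists_subset_card_eq h3
    obtain ⟨x, y, z, hxy, hxz, hyz, rfl⟩ := Set.ncard_eq_three.mp htc
    have hx : x ∈ S := hts (by simp)
    have hy : y ∈ S := hts (by simp)
    have hz : z ∈ S := hts (by simp)
    set t₂ : ℝ := ((y - x) * (starRingEnd ℂ) w).im / normSq w with ht2
    set t₃ : ℝ := ((z - x) * (starRingEnd ℂ) w).im / normSq w with ht3
    have hyrep : y = x + (t₂ : ℂ) * (I * w) := by
      have := rep (y - x) (orth y hy x hx)
      rw [← ht2] at this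
      linear_combination this
    have hzrep : z = x + (t₃ : ℂ) * (I * w) := by
      have := rep (z - x) (orth z hz x hx)
      rw [← ht3] at this
      linear_combination this
    have ht20 : t₂ ≠ 0 := by
      intro h; apply hxy; rw [hyrep, h]; simp
    have ht30 : t₃ ≠ 0 := by
      intro h; apply hxz; rw [hzrep, h]; simp
    have ht23 : t₂ ≠ t₃ := by
      intro h; apply hyz; rw [hyrep, hzrep, h]
    set β : ℝ := ((x - O₁) * (starRingEnd ℂ) (I * w)).re with hβ
    have quad : ∀ t : ℝ, x + (t : ℂ) * (I * w) ∈ S →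
        t * (t * normSq w + 2 * β) = 0 := by
      intro t hmem
      have e₁ : normSq (x + (t:ℂ)*(I*w) - O₁) = r₁ ^ 2 := by
        rw [← Complex.sq_norm, h₁ _ hmem]
      have e₀ : normSq (x - O₁) = r₁ ^ 2 := by
        rw [← Complex.sq_norm, h₁ _ hx]
      have hre : (x + (t:ℂ)*(I*w) - O₁) = (x - O₁) + (t:ℂ)*(I*w) := by ring
      rw [hre, normSq_add] at e₁
      have hA : normSq ((t:ℂ)*(I*w)) = t^2 * normSq w := by
        rw [normSq_mul, normSq_mul, normSq_ofReal, normSq_I]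
        ring
      have hB : ((x - O₁) * (starRingEnd ℂ) ((t:ℂ)*(I*w))).re = t * β := by
        rw [map_mul, conj_ofReal]
        have : (x - O₁) * ((t:ℂ) * (starRingEnd ℂ) (I*w))
            = (t:ℂ) * ((x - O₁) * (starRingEnd ℂ) (I*w)) := by ring
        rw [this, re_ofReal_mul, hβ]
      rw [hA, hB] at e₁
      nlinarith [e₁, e₀]
    have q₂ := quad t₂ (by rw [← hyrep]; exact hy)
    have q₃ := quad t₃ (by rw [← hzrep]; exact hz)
    have l₂ : t₂ * normSq w + 2 * β = 0 :=
      (mul_eq_zero.mp q₂).resolve_left ht20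
    have l₃ : t₃ * normSq w + 2 * β = 0 :=
      (mul_eq_zero.mp q₃).resolve_left ht30
    exact ht23 (mul_right_cancel₀ hnsq (by linarith))
  subst hOeq
  obtain ⟨z, hzS⟩ := hne
  exact ⟨rfl, by rw [← h₁ z hzS, ← h₂ z hzS]⟩

lemma finset_bezout (K : Finset ℕ) :
    ∃ μ : ℕ → ℤ, ∑ k ∈ K, μ k * (k : ℤ) = ((K.gcd id : ℕ) : ℤ) := by
  classical
  induction K using Finset.induction_on with
  | empty => exact ⟨fun _ => 0, by simp⟩
  | insert a K' ha ih =>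
    obtain ⟨μ, hμ⟩ := ih
    set g : ℕ := K'.gcd id with hgdef
    refine ⟨fun k => if k = a then Nat.gcdA a g else Nat.gcdB a g * μ k, ?_⟩
    rw [Finset.sum_insert ha, Finset.gcd_insert]
    have h1 : ∀ k ∈ K', (if k = a then Nat.gcdA a g else Nat.gcdB a g * μ k) * (k:ℤ)
        = Nat.gcdB a g * (μ k * k) := by
      intro k hk
      rw [if_neg (by rintro rfl; exact ha hk)]; ring
    rw [Finset.sum_congr rfl h1, ← Finset.mul_sum, hμ]
    simp only [if_pos rfl]
    have hb := Nat.gcd_eq_gcd_ab a g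
    have h3 : gcd (id a) (K'.gcd id) = Nat.gcd a g := by rw [gcd_eq_nat_gcd, hgdef]; rfl
    rw [h3, hb]
    simp only [if_true]
    ring

lemma esymm_scale (s : Multiset ℂ) (u : ℂ) (k : ℕ) :
    (s.map (fun t => u * t)).esymm k = u ^ k * s.esymm k := by
  have := Multiset.pow_smul_esymm u k s
  simp only [smul_eq_mul] at this
  rw [← this]

lemma esymm_hom (σ : ℂ →+* ℂ) (s : Multiset ℂ) (k : ℕ) :
    (s.map (fun t => σ t)).esymm k = σ (s.esymm k) := by
  simp only [Multiset.esymm, Multiset.powersetCard_map, Multiset.map_map]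
  rw [map_multiset_sum, Multiset.map_map]
  apply congr_arg
  apply Multiset.map_congr rfl
  intro t ht
  simpa using (map_multiset_prod σ t).symm

lemma coeff_scale (s : Multiset ℂ) (u : ℂ) {j : ℕ} (hj : j ≤ Multiset.card s) :
    ((s.map (fun t => u * t)).map (fun t => X - C t)).prod.coeff j
      = u ^ (Multiset.card s - j) * (s.map (fun t => X - C t)).prod.coeff j := by
  rw [Multiset.prod_X_sub_C_coeff _ (by simpa using hj),
    Multiset.prod_X_sub_C_coeff s hj, Multiset.card_map, esymm_scale]
  ring

lemma coeff_hom (σ : ℂ →+* ℂ) (s : Multiset ℂ) {j : ℕ} (hj : j ≤ Multiset.card s) :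
    ((s.map (fun t => σ t)).map (fun t => X - C t)).prod.coeff j
      = σ ((s.map (fun t => X - C t)).prod.coeff j) := by
  rw [Multiset.prod_X_sub_C_coeff _ (by simpa using hj),
    Multiset.prod_X_sub_C_coeff s hj, Multiset.card_map, esymm_hom]
  rw [map_mul, map_pow, map_neg, map_one]

lemma prod_zpow_sum (u : ℂ) (hu : u ≠ 0) (K : Finset ℕ) (f : ℕ → ℤ) :
    ∏ k ∈ K, u ^ (f k) = u ^ (∑ k ∈ K, f k) := by
  classical
  induction K using Finset.induction_on with
  | empty => simp
  | insert a K' ha ih =>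
    rw [Finset.prod_insert ha, Finset.sum_insert ha, ih, zpow_add₀ hu]

lemma zpow_natCast_mul₀ (u : ℂ) (hu : u ≠ 0) (k : ℕ) (m : ℤ) :
    (u ^ k) ^ m = u ^ ((k : ℤ) * m) := by
  have h := zpow_mul (Units.mk0 u hu) (k : ℤ) m
  have := congrArg (Units.val) h
  simpa [Units.val_zpow_eq_zpow_val, zpow_natCast] using this.symm

/-! ### The construction -/

def goodPair (S : Set ℂ) (p : ℂ × ℝ) : Prop :=
  0 < p.2 ∧ ∀ z ∈ S, ‖z - p.1‖ = p.2

def ctr (S : Set ℂ) : ℂ × ℝ := if h : ∃ p, goodPair S p then h.choose else (0, 1)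

lemma ctr_spec {S : Set ℂ} (h : ∃ p, goodPair S p) : goodPair S (ctr S) := by
  rw [ctr, dif_pos h]; exact h.choose_spec

def msS (S : Set ℂ) : Multiset ℂ :=
  if h : S.Finite then h.toFinset.val.map (fun z => (z - (ctr S).1) / ((ctr S).2 : ℂ)) else 0

def polyS (S : Set ℂ) : Polynomial ℂ := ((msS S).map (fun t => X - C t)).prod

def KS (n : ℕ) (S : Set ℂ) : Finset ℕ :=
  (Finset.Icc 1 n).filter (fun k => (polyS S).coeff (n - k) ≠ 0)

def bezf (K : Finset ℕ) : ℕ → ℤ := (finset_bezout K).choose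

lemma bezf_spec (K : Finset ℕ) : ∑ k ∈ K, bezf K k * (k : ℤ) = ((K.gcd id : ℕ) : ℤ) :=
  (finset_bezout K).choose_spec

def BB (n : ℕ) (S : Set ℂ) : ℂ :=
  if 1 < (KS n S).gcd id then (ctr S).1
  else (ctr S).1 + ((ctr S).2 : ℂ) *
    ∏ k ∈ KS n S,
      ((polyS S).coeff (n - k) / (‖(polyS S).coeff (n - k)‖ : ℂ)) ^ (bezf (KS n S) k)

/-! ### Facts about the construction, under the standing hypotheses -/

section Facts

variable {n : ℕ} {S : Set ℂ} {O : ℂ} {r : ℝ}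

lemma ctr_eq (hn : 3 ≤ n) (hcard : S.ncard = n) (hr : 0 < r)
    (hcirc : ∀ z ∈ S, ‖z - O‖ = r) : ctr S = (O, r) := by
  have h3 : 3 ≤ S.ncard := by omega
  have hgp := ctr_spec (⟨(O, r), hr, hcirc⟩ : ∃ p, goodPair S p)
  have := circle_unique h3 hgp.2 hcirc
  exact Prod.ext this.1 this.2

lemma msS_eq (hn : 3 ≤ n) (hcard : S.ncard = n) (hr : 0 < r)
    (hcirc : ∀ z ∈ S, ‖z - O‖ = r) (hfin : S.Finite) :
    msS S = hfin.toFinset.val.map (fun z => (z - O) / (r : ℂ)) := by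
  have h := ctr_eq hn hcard hr hcirc
  rw [msS, dif_pos hfin, h]

lemma msS_card (hn : 3 ≤ n) (hcard : S.ncard = n) (hr : 0 < r)
    (hcirc : ∀ z ∈ S, ‖z - O‖ = r) :
    Multiset.card (msS S) = n := by
  have hfin : S.Finite := Set.finite_of_ncard_ne_zero (by omega)
  rw [msS_eq hn hcard hr hcirc hfin, Multiset.card_map, ← hcard,
    Set.ncard_eq_toFinset_card _ hfin]
  rfl

lemma msS_mem (hn : 3 ≤ n) (hcard : S.ncard = n) (hr : 0 < r)
    (hcirc : ∀ z ∈ S, ‖z - O‖ = r) (t : ℂ) :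
    t ∈ msS S ↔ ∃ z ∈ S, (z - O) / (r : ℂ) = t := by
  have hfin : S.Finite := Set.finite_of_ncard_ne_zero (by omega)
  rw [msS_eq hn hcard hr hcirc hfin, Multiset.mem_map]
  constructor
  · rintro ⟨z, hz, rfl⟩
    exact ⟨z, by simpa using hz, rfl⟩
  · rintro ⟨z, hz, rfl⟩
    exact ⟨z, by simpa [Set.Finite.mem_toFinset] using hz, rfl⟩

lemma msS_abs (hn : 3 ≤ n) (hcard : S.ncard = n) (hr : 0 < r)
    (hcirc : ∀ z ∈ S, ‖z - O‖ = r) :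
    ∀ t ∈ msS S, ‖t‖ = 1 := by
  intro t ht
  obtain ⟨z, hz, rfl⟩ := (msS_mem hn hcard hr hcirc t).mp ht
  simp only [norm_div, hcirc z hz, Complex.norm_real, Real.norm_eq_abs, abs_of_pos hr]
  field_simp

lemma msS_nodup (hn : 3 ≤ n) (hcard : S.ncard = n) (hr : 0 < r)
    (hcirc : ∀ z ∈ S, ‖z - O‖ = r) : (msS S).Nodup := by
  have hfin : S.Finite := Set.finite_of_ncard_ne_zero (by omega)
  have hrC : (r : ℂ) ≠ 0 := by exact_mod_cast hr.ne'
  rw [msS_eq hn hcard hr hcirc hfin]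
  refine Multiset.Nodup.map ?_ hfin.toFinset.nodup
  intro x y hxy
  exact sub_left_injective ((div_left_inj' hrC).mp hxy)

lemma KS_mem_n (hn : 3 ≤ n) (hcard : S.ncard = n) (hr : 0 < r)
    (hcirc : ∀ z ∈ S, ‖z - O‖ = r) : n ∈ KS n S := by
  rw [KS, Finset.mem_filter]
  refine ⟨by simp [Finset.mem_Icc]; omega, ?_⟩
  rw [Nat.sub_self, polyS, coeff_zero_eq_eval_zero, eval_multiset_prod, Multiset.map_map]
  apply Multiset.prod_ne_zero
  intro h0
  rw [Multiset.mem_map] at h0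
  obtain ⟨t, ht, het⟩ := h0
  simp only [Function.comp_apply, eval_sub, eval_X, eval_C, zero_sub, neg_eq_zero] at het
  have := msS_abs hn hcard hr hcirc t ht
  rw [het] at this; simp at this

lemma KS_gcd_ne_zero (hn : 3 ≤ n) (hcard : S.ncard = n) (hr : 0 < r)
    (hcirc : ∀ z ∈ S, ‖z - O‖ = r) : (KS n S).gcd id ≠ 0 := by
  intro h
  rw [Finset.gcd_eq_zero_iff] at h
  have := h n (KS_mem_n hn hcard hr hcirc)
  simp at this; omega

lemma KS_coeff_ne_zero {k : ℕ} (hk : k ∈ KS n S) : (polyS S).coeff (n - k) ≠ 0 :=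
  (Finset.mem_filter.mp hk).2

lemma KS_le {k : ℕ} (hk : k ∈ KS n S) : 1 ≤ k ∧ k ≤ n := by
  have := (Finset.mem_filter.mp hk).1
  rwa [Finset.mem_Icc] at this

lemma absv_one (n : ℕ) (S : Set ℂ) :
    ‖∏ k ∈ KS n S,
      ((polyS S).coeff (n - k) / (‖(polyS S).coeff (n - k)‖ : ℂ))
        ^ (bezf (KS n S) k)‖ = 1 := by
  rw [norm_prod]
  apply Finset.prod_eq_one
  intro k hk
  have hc : (polyS S).coeff (n - k) ≠ 0 := KS_coeff_ne_zero hk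
  rw [norm_zpow, norm_div, Complex.norm_real, Real.norm_of_nonneg (norm_nonneg _),
    div_self (norm_ne_zero_iff.mpr hc), one_zpow]

end Facts


lemma BB_transform (n : ℕ) (hn : 3 ≤ n) {S : Set ℂ} {O : ℂ} {r : ℝ}
    (hcard : S.ncard = n) (hr : 0 < r) (hcirc : ∀ z ∈ S, ‖z - O‖ = r)
    (σ : ℂ →+* ℂ) (hσabs : ∀ z, ‖σ z‖ = ‖z‖)
    (hσr : ∀ x : ℝ, σ (x : ℂ) = (x : ℂ))
    {a b : ℂ} (ha : a ≠ 0) {f : ℂ → ℂ} (hf : ∀ z, f z = a * σ z + b) :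
    BB n (f '' S) = a * σ (BB n S) + b := by
  have hfin : S.Finite := Set.finite_of_ncard_ne_zero (by omega)
  have hrC : (r : ℂ) ≠ 0 := by exact_mod_cast hr.ne'
  have hane : ‖a‖ ≠ 0 := norm_ne_zero_iff.mpr ha
  have haC : ((‖a‖ : ℝ) : ℂ) ≠ 0 := by exact_mod_cast hane
  set u : ℂ := a / ((‖a‖ : ℝ) : ℂ) with hu
  have hu0 : u ≠ 0 := div_ne_zero ha haC
  have huabs : ‖u‖ = 1 := by
    rw [hu, norm_div, Complex.norm_real, Real.norm_of_nonneg (norm_nonneg _),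
      div_self hane]
  have hσ0 : ∀ c : ℂ, σ c = 0 ↔ c = 0 := by
    intro c
    constructor
    · intro h
      have := hσabs c
      rw [h] at this
      simp at this
      exact norm_eq_zero.mp this.symm
    · intro h; rw [h, map_zero]
  have finj : Function.Injective f := by
    intro x y h
    rw [hf, hf] at h
    have h2 := mul_left_cancel₀ ha (add_right_cancel h)
    have : σ (x - y) = 0 := by rw [map_sub, h2, sub_self]
    have := (hσ0 _).mp this
    exact sub_eq_zero.mp this
  have hcard' : (f '' S).ncard = n := by
    rw [Set.ncard_image_of_injective _ finj, hcard]
  have hr' : 0 < ‖a‖ * r := mul_pos (norm_pos_iff.mpr ha) hr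
  have hcirc' : ∀ z' ∈ f '' S, ‖z' - (a * σ O + b)‖ = ‖a‖ * r := by
    rintro _ ⟨z, hz, rfl⟩
    rw [hf]
    have h1 : a * σ z + b - (a * σ O + b) = a * σ (z - O) := by
      rw [map_sub]; ring
    rw [h1, norm_mul, hσabs, hcirc z hz]
  have hfin' : (f '' S).Finite := hfin.image f
  have hmcard : Multiset.card (msS S) = n := msS_card hn hcard hr hcirc
  have hm' : msS (f '' S) = ((msS S).map (fun t => σ t)).map (fun t => u * t) := by
    rw [msS_eq hn hcard' hr' hcirc' hfin', msS_eq hn hcard hr hcirc hfin]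
    rw [Set.Finite.toFinset_image f hfin hfin',
      Finset.image_val_of_injOn (finj.injOn)]
    rw [Multiset.map_map, Multiset.map_map, Multiset.map_map]
    apply Multiset.map_congr rfl
    intro z hz
    simp only [Function.comp_apply]
    rw [hf]
    have h1 : a * σ z + b - (a * σ O + b) = a * σ (z - O) := by
      rw [map_sub]; ring
    rw [h1, hu]
    rw [map_div₀ σ, hσr, map_sub σ]
    push_cast
    field_simp
    try ring
  have hpolyC : ∀ k, k ≤ n →
      (polyS (f '' S)).coeff (n - k) = u ^ k * σ ((polyS S).coeff (n - k)) := by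
    intro k hk
    have hcm : Multiset.card ((msS S).map (fun t => σ t)) = n := by
      rw [Multiset.card_map, hmcard]
    have h1 : (polyS (f '' S)).coeff (n - k)
        = u ^ (Multiset.card ((msS S).map (fun t => σ t)) - (n - k))
          * (((msS S).map (fun t => σ t)).map (fun t => X - C t)).prod.coeff (n - k) := by
      rw [show polyS (f '' S) = ((msS (f '' S)).map (fun t => X - C t)).prod from rfl, hm']
      exact coeff_scale _ u (by rw [hcm]; omega)
    rw [h1, hcm, coeff_hom σ _ (by rw [hmcard]; omega)]
    have : n - (n - k) = k := by omega
    rw [this]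
    rfl
  have hKS : KS n (f '' S) = KS n S := by
    apply Finset.ext
    intro k
    simp only [KS, Finset.mem_filter, Finset.mem_Icc]
    constructor
    · rintro ⟨⟨h1, h2⟩, h3⟩
      refine ⟨⟨h1, h2⟩, ?_⟩
      intro h0
      rw [hpolyC k h2, h0, map_zero, mul_zero] at h3
      exact h3 rfl
    · rintro ⟨⟨h1, h2⟩, h3⟩
      refine ⟨⟨h1, h2⟩, ?_⟩
      rw [hpolyC k h2]
      intro h0
      rcases mul_eq_zero.mp h0 with h | h
      · exact pow_ne_zero k hu0 h
      · exact h3 ((hσ0 _).mp h)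
  have hctrS := ctr_eq hn hcard hr hcirc
  have hctrS' := ctr_eq hn hcard' hr' hcirc'
  rw [BB, BB, hKS]
  split_ifs with hg
  · rw [hctrS, hctrS']
  · have hgne := KS_gcd_ne_zero hn hcard hr hcirc
    have hgcd1 : (KS n S).gcd id = 1 := by omega
    rw [hctrS, hctrS']
    simp only
    have hprod : ∏ k ∈ KS n S,
        ((polyS (f '' S)).coeff (n - k)
          / ((‖(polyS (f '' S)).coeff (n - k)‖ : ℝ) : ℂ)) ^ (bezf (KS n S) k)
        = u * σ (∏ k ∈ KS n S,
            ((polyS S).coeff (n - k)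
              / ((‖(polyS S).coeff (n - k)‖ : ℝ) : ℂ)) ^ (bezf (KS n S) k)) := by
      have step : ∀ k ∈ KS n S,
          ((polyS (f '' S)).coeff (n - k)
            / ((‖(polyS (f '' S)).coeff (n - k)‖ : ℝ) : ℂ)) ^ (bezf (KS n S) k)
          = u ^ ((k : ℤ) * bezf (KS n S) k)
            * σ (((polyS S).coeff (n - k)
              / ((‖(polyS S).coeff (n - k)‖ : ℝ) : ℂ))) ^ (bezf (KS n S) k) := by
        intro k hk
        have hkn := (KS_le hk).2
        have hc := KS_coeff_ne_zero hk
        rw [hpolyC k hkn]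
        have habs2 : ‖u ^ k * σ ((polyS S).coeff (n - k))‖
            = ‖(polyS S).coeff (n - k)‖ := by
          rw [norm_mul, norm_pow, huabs, one_pow, one_mul, hσabs]
        rw [habs2]
        have hdiv : u ^ k * σ ((polyS S).coeff (n - k))
              / ((‖(polyS S).coeff (n - k)‖ : ℝ) : ℂ)
            = u ^ k * σ ((polyS S).coeff (n - k)
              / ((‖(polyS S).coeff (n - k)‖ : ℝ) : ℂ)) := by
          rw [map_div₀ σ, hσr]
          ring
        rw [hdiv, mul_zpow, zpow_natCast_mul₀ u hu0]
      rw [Finset.prod_congr rfl step, Finset.prod_mul_distrib, prod_zpow_sum u hu0]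
      have hsum : ∑ k ∈ KS n S, (k : ℤ) * bezf (KS n S) k = 1 := by
        have hb := bezf_spec (KS n S)
        rw [hgcd1] at hb
        push_cast at hb
        rw [← hb]
        apply Finset.sum_congr rfl
        intro k _
        ring
      rw [hsum, zpow_one]
      congr 1
      rw [map_prod σ]
      apply Finset.prod_congr rfl
      intro k _
      rw [map_zpow₀]
    rw [hprod]
    rw [map_add σ, map_mul σ, hσr]
    set w : ℂ := σ (∏ k ∈ KS n S,
      ((polyS S).coeff (n - k)
        / ((‖(polyS S).coeff (n - k)‖ : ℝ) : ℂ)) ^ (bezf (KS n S) k)) with hw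
    push_cast
    rw [hu]
    field_simp
    ring

/-- Solution of the First Step Problem: for every `n ≥ 3` there is a function
`B` on `n`-element subsets of ℂ lying on a common circle (center `O`,
radius `r`) such that `B S ∈ c ∪ {O}`, `B S = O` iff `S` is rotationally
symmetric about `O`, and `B` commutes with similarities. -/
theorem stmt4 (n : ℕ) (hn : 3 ≤ n) :
    ∃ B : Set ℂ → ℂ,
      ∀ (S : Set ℂ) (O : ℂ) (r : ℝ), S.ncard = n → 0 < r →
        (∀ z ∈ S, ‖z - O‖ = r) →
        (‖B S - O‖ = r ∨ B S = O) ∧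
        (B S = O ↔ ∃ u : ℂ, ‖u‖ = 1 ∧ u ≠ 1 ∧
            (fun z => O + u * (z - O)) '' S = S) ∧
        (∀ f : ℂ → ℂ, IsSimilarity f → B (f '' S) = f (B S)) := by
  refine ⟨BB n, ?_⟩
  intro S O r hcard hr hcirc
  have hctr : ctr S = (O, r) := ctr_eq hn hcard hr hcirc
  refine ⟨?_, ?_, ?_⟩
  · -- bullet 1
    rw [BB]
    split_ifs with hg
    · right; rw [hctr]
    · left
      rw [hctr]
      simp only [add_sub_cancel_left]
      rw [norm_mul, Complex.norm_real, Real.norm_of_nonneg hr.le, absv_one, mul_one]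
  · -- bullet 2
    have hfin : S.Finite := Set.finite_of_ncard_ne_zero (by omega)
    have hrC : (r : ℂ) ≠ 0 := by exact_mod_cast hr.ne'
    have hmcard := msS_card hn hcard hr hcirc
    have hpoly : polyS S = ((msS S).map (fun t => X - C t)).prod := rfl
    constructor
    · intro hBO
      have hgne := KS_gcd_ne_zero hn hcard hr hcirc
      have hg : 1 < (KS n S).gcd id := by
        by_contra hgle
        rw [BB, if_neg hgle, hctr] at hBO
        simp only [add_eq_left] at hBO
        rcases mul_eq_zero.mp hBO with h | h
        · exact hrC h
        · have := absv_one n S; rw [h] at this; simp at this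
      set g := (KS n S).gcd id with hgdef
      have hgC : ((g : ℕ) : ℝ) ≠ 0 := by
        have : g ≠ 0 := by omega
        exact_mod_cast this
      set u : ℂ := Complex.exp (((2 * Real.pi / g : ℝ) : ℂ) * I) with hudef
      have huabs : ‖u‖ = 1 := Complex.norm_exp_ofReal_mul_I _
      have hu0 : u ≠ 0 := by
        intro h; rw [h] at huabs; simp at huabs
      have hgCc : (g : ℂ) ≠ 0 := by exact_mod_cast hgC
      have hug : u ^ g = 1 := by
        rw [hudef, ← Complex.exp_nat_mul]
        have : (g : ℂ) * (((2 * Real.pi / g : ℝ) : ℂ) * I) = 2 * (Real.pi : ℂ) * I := by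
          push_cast
          field_simp
        rw [this, Complex.exp_two_pi_mul_I]
      have hu1 : u ≠ 1 := by
        intro h
        rw [hudef, Complex.exp_eq_one_iff] at h
        obtain ⟨m, hm⟩ := h
        have hm' : (((2 * Real.pi / g : ℝ)) : ℂ) * I = ((m : ℂ) * (2 * Real.pi)) * I := by
          rw [hm]; ring
        have hI := mul_right_cancel₀ I_ne_zero hm'
        have hR : (2 * Real.pi / g : ℝ) = (m : ℝ) * (2 * Real.pi) := by
          exact_mod_cast hI
        have hpi := Real.pi_pos
        have hπ : (2 * Real.pi) ≠ 0 := by positivity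
        rw [div_eq_iff hgC] at hR
        have hm1 : (m : ℝ) * (g : ℝ) = 1 := by
          have hc : (2 * Real.pi) * ((m : ℝ) * g) = (2 * Real.pi) * 1 := by
            linear_combination -hR
          exact mul_left_cancel₀ hπ hc
        have hm2 : (m * (g : ℤ) : ℤ) = 1 := by exact_mod_cast hm1
        have hdvd : (g : ℤ) ∣ 1 := ⟨m, by linear_combination -hm2⟩
        have hdvd' : g ∣ 1 := by exact_mod_cast hdvd
        have := Nat.dvd_one.mp hdvd'
        omega
      have hK1 : ∀ k ∈ KS n S, u ^ k = 1 := by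
        intro k hk
        obtain ⟨m, hm⟩ := Finset.gcd_dvd (f := (id : ℕ → ℕ)) hk
        have hm' : k = g * m := by rw [hgdef]; exact hm
        rw [hm', pow_mul, hug, one_pow]
      have hP : (((msS S).map (fun t => u * t)).map (fun t => X - C t)).prod = polyS S := by
        apply Polynomial.ext
        intro j
        rcases le_or_gt j n with hj | hj
        · rw [coeff_scale _ _ (by rw [hmcard]; exact hj), hmcard, ← hpoly]
          rcases eq_or_ne ((polyS S).coeff j) 0 with h0 | h0
          · rw [h0, mul_zero]
          · rcases eq_or_lt_of_le hj with rfl | hjlt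
            · rw [Nat.sub_self, pow_zero, one_mul]
            · have hk : n - j ∈ KS n S := by
                rw [KS, Finset.mem_filter, Finset.mem_Icc]
                refine ⟨⟨by omega, by omega⟩, ?_⟩
                rw [Nat.sub_sub_self hj]
                exact h0
              rw [hK1 _ hk, one_mul]
        · rw [coeff_eq_zero_of_natDegree_lt, coeff_eq_zero_of_natDegree_lt]
          · rw [hpoly, natDegree_multiset_prod_X_sub_C_eq_card, hmcard]; exact hj
          · rw [natDegree_multiset_prod_X_sub_C_eq_card, Multiset.card_map, hmcard]; exact hj
      have hmu : (msS S).map (fun t => u * t) = msS S := by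
        have h1 := roots_multiset_prod_X_sub_C ((msS S).map (fun t => u * t))
        rw [hP] at h1
        have h2 : (polyS S).roots = msS S := by
          rw [hpoly]; exact roots_multiset_prod_X_sub_C _
        exact h1.symm.trans h2
      refine ⟨u, huabs, hu1, ?_⟩
      have hMinj : Function.Injective (fun z : ℂ => O + u * (z - O)) := by
        intro x y hxy
        simp only [add_right_inj] at hxy
        have h2 := mul_left_cancel₀ hu0 hxy
        have := congrArg (· + O) h2
        simpa using this
      have hsub : (fun z => O + u * (z - O)) '' S ⊆ S := by
        rintro _ ⟨z, hz, rfl⟩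
        have ht : (z - O) / (r : ℂ) ∈ msS S :=
          (msS_mem hn hcard hr hcirc _).mpr ⟨z, hz, rfl⟩
        have ht2 : u * ((z - O) / (r : ℂ)) ∈ msS S := by
          rw [← hmu]; exact Multiset.mem_map_of_mem _ ht
        obtain ⟨w, hw, hweq⟩ := (msS_mem hn hcard hr hcirc _).mp ht2
        have hwz : w = O + u * (z - O) := by
          field_simp at hweq
          linear_combination hweq
        show O + u * (z - O) ∈ S
        exact hwz ▸ hw
      apply Set.eq_of_subset_of_ncard_le hsub ?_ hfin
      rw [Set.ncard_image_of_injective _ hMinj]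
    · rintro ⟨u, huabs, hu1, himg⟩
      have hu0 : u ≠ 0 := by
        intro h; rw [h] at huabs; simp at huabs
      have hmu : (msS S).map (fun t => u * t) = msS S := by
        have hnd := msS_nodup hn hcard hr hcirc
        have hnd2 : ((msS S).map (fun t => u * t)).Nodup :=
          hnd.map (fun x y h => mul_left_cancel₀ hu0 h)
        rw [Multiset.Nodup.ext hnd2 hnd]
        intro t
        constructor
        · intro ht
          obtain ⟨s, hs, rfl⟩ := Multiset.mem_map.mp ht
          obtain ⟨z, hz, rfl⟩ := (msS_mem hn hcard hr hcirc _).mp hs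
          have hmz : O + u * (z - O) ∈ S := by
            rw [← himg]; exact ⟨z, hz, rfl⟩
          refine (msS_mem hn hcard hr hcirc _).mpr ⟨O + u * (z - O), hmz, ?_⟩
          field_simp
          ring
        · intro ht
          obtain ⟨z, hz, rfl⟩ := (msS_mem hn hcard hr hcirc _).mp ht
          have : z ∈ (fun z => O + u * (z - O)) '' S := by rw [himg]; exact hz
          obtain ⟨w, hw, hweq⟩ := this
          refine Multiset.mem_map.mpr
            ⟨(w - O) / (r : ℂ), (msS_mem hn hcard hr hcirc _).mpr ⟨w, hw, rfl⟩, ?_⟩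
          simp only at hweq
          rw [← hweq]
          field_simp
          try ring
      have hK1 : ∀ k ∈ KS n S, u ^ k = 1 := by
        intro k hk
        obtain ⟨h1k, hkn⟩ := KS_le hk
        have hco := KS_coeff_ne_zero hk
        have hcs := coeff_scale (msS S) u
          (show n - k ≤ Multiset.card (msS S) by rw [hmcard]; omega)
        rw [hmu, ← hpoly, hmcard] at hcs
        have hnk : n - (n - k) = k := by omega
        rw [hnk] at hcs
        have h2 : u ^ k * (polyS S).coeff (n - k) = 1 * (polyS S).coeff (n - k) := by
          rw [one_mul, ← hcs]
        exact mul_right_cancel₀ hco h2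
      have hufin : IsOfFinOrder u :=
        isOfFinOrder_iff_pow_eq_one.mpr ⟨n, by omega, hK1 n (KS_mem_n hn hcard hr hcirc)⟩
      have hd1 : orderOf u ≠ 1 := fun h => hu1 (orderOf_eq_one_iff.mp h)
      have hddvd : orderOf u ∣ (KS n S).gcd id :=
        Finset.dvd_gcd (fun k hk => orderOf_dvd_of_pow_eq_one (hK1 k hk))
      have hgne : (KS n S).gcd id ≠ 0 := KS_gcd_ne_zero hn hcard hr hcirc
      have hd0 : orderOf u ≠ 0 := hufin.orderOf_pos.ne'
      have hgt : 1 < (KS n S).gcd id := by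
        have hle := Nat.le_of_dvd (Nat.pos_of_ne_zero hgne) hddvd
        omega
      rw [BB, if_pos hgt, hctr]
  · -- bullet 3
    intro f hf
    obtain ⟨a, b, ha, hca | hcc⟩ := similarity_form hf
    · have := BB_transform n hn hcard hr hcirc (RingHom.id ℂ)
        (fun z => rfl) (fun x => rfl) ha (f := f) (by intro z; rw [hca z]; rfl)
      rw [this, hca]
      rfl
    · have := BB_transform n hn hcard hr hcirc (starRingEnd ℂ)
        (fun z => Complex.norm_conj z) (fun x => Complex.conj_ofReal x) ha
        (f := f) (by intro z; rw [hcc z])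
      rw [this, hcc]
end
end

section
/- For every n ≥ 3 there exists a function B̃* assigning a point of ℂ to every labelled n-element subset (S, ℓ), where S ⊂ ℂ is an n-element set whose points all lie on a common circle and ℓ : S → ℕ is a labelling of its points, such that for every such (S, ℓ), with S contained in the circle c with center O and radius r > 0, the following hold: (1) B̃*(S, ℓ) lies on c or B̃*(S, ℓ) = O; (2) B̃*(S, ℓ) = O if and only if there exists a nontrivial rotation T about O with T(S) = S and ℓ(T(v)) = ℓ(v) for all v ∈ S; (3) for every similarity f of the plane, B̃*(f(S), ℓ ∘ f⁻¹) = f(B̃*(S, ℓ)). -/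
noncomputable section

namespace Stmt5Aux

open Function Set Complex

local notation "conj'" => starRingEnd ℂ

/-- Labelled configurations. -/
abbrev Cfg := Set ℂ × (ℂ → ℕ)

/-- Nontrivial rotational symmetry about `O` preserving labels. -/
def RotSym (p : Cfg) (O : ℂ) : Prop :=
  ∃ u : ℂ, ‖u‖ = 1 ∧ u ≠ 1 ∧
    (fun z => O + u * (z - O)) '' p.1 = p.1 ∧
    ∀ v ∈ p.1, p.2 (O + u * (v - O)) = p.2 v

/-- Label-preserving self-similarity. -/
def SimSym (f : ℂ → ℂ) (p : Cfg) : Prop :=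
  IsSimilarity f ∧ f '' p.1 = p.1 ∧ ∀ v ∈ p.1, p.2 (f v) = p.2 v

lemma sim_id : IsSimilarity id := ⟨Function.bijective_id, 1, one_pos, by simp⟩

lemma sim_comp {f g : ℂ → ℂ} (hf : IsSimilarity f) (hg : IsSimilarity g) :
    IsSimilarity (g ∘ f) := by
  obtain ⟨hfb, r, hr, hfd⟩ := hf
  obtain ⟨hgb, s, hs, hgd⟩ := hg
  exact ⟨hgb.comp hfb, s * r, by positivity, fun z w => by
    simp only [Function.comp_apply, hgd, hfd, mul_assoc]⟩

lemma sim_inv {f : ℂ → ℂ} (hf : IsSimilarity f) : IsSimilarity (invFun f) := by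
  obtain ⟨hfb, r, hr, hfd⟩ := hf
  have hli : Function.LeftInverse (invFun f) f := leftInverse_invFun hfb.1
  have hri : Function.RightInverse (invFun f) f := rightInverse_invFun hfb.2
  refine ⟨⟨hri.injective, hli.surjective⟩, r⁻¹, by positivity, fun z w => ?_⟩
  have := hfd (invFun f z) (invFun f w)
  rw [hri z, hri w] at this
  field_simp [this]
  rw [this]; ring

lemma get3 {S : Set ℂ} (h : 3 ≤ S.ncard) :
    ∃ a b c : ℂ, a ∈ S ∧ b ∈ S ∧ c ∈ S ∧ a ≠ b ∧ a ≠ c ∧ b ≠ c := by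
  have hfin : S.Finite := by
    by_contra hf
    rw [Set.Infinite.ncard hf] at h; omega
  have hne : S.Nonempty := by
    rw [← Set.ncard_pos hfin]; omega
  obtain ⟨a, ha⟩ := hne
  have hd : (S \ {a}).ncard = S.ncard - 1 := Set.ncard_diff_singleton_of_mem ha
  have h2 : 1 < (S \ {a}).ncard := by omega
  obtain ⟨b, c, hb, hc, hbc⟩ := (Set.one_lt_ncard_iff (hfin.diff (t := {a}))).mp h2
  exact ⟨a, b, c, ha, hb.1, hc.1,
    fun h => hb.2 (by simp [← h]), fun h => hc.2 (by simp [← h]), hbc⟩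

lemma circ_eq {z O : ℂ} {r : ℝ} (h : ‖z - O‖ = r) :
    (z - O) * conj' (z - O) = (r : ℂ)^2 := by
  have : Complex.normSq (z - O) = r^2 := by rw [← Complex.sq_norm, h]
  rw [Complex.mul_conj, this]; push_cast; ring

lemma unit_mul_conj {u : ℂ} (h : ‖u‖ = 1) : u * conj' u = 1 := by
  rw [Complex.mul_conj, ← Complex.sq_norm, h]; norm_num

lemma circle_unique {S : Set ℂ} (h3 : 3 ≤ S.ncard) {O O' : ℂ} {r r' : ℝ}
    (hr : 0 < r) (hr' : 0 < r')
    (h1 : ∀ z ∈ S, ‖z - O‖ = r) (h2 : ∀ z ∈ S, ‖z - O'‖ = r') :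
    O' = O ∧ r' = r := by
  obtain ⟨z₁, z₂, z₃, hz₁, hz₂, hz₃, h12, h13, h23⟩ := get3 h3
  have hOO : O' = O := by
    by_contra hne
    set e : ℂ := O' - O with he_def
    have he : e ≠ 0 := sub_ne_zero.mpr hne
    have hce : conj' e ≠ 0 := by
      intro h; apply he
      have := congrArg conj' h
      simpa using this
    set C : ℂ := (r : ℂ)^2 + e * conj' e - (r' : ℂ)^2 with hC
    have key : ∀ z ∈ S, conj' e * (z - O)^2 + (r:ℂ)^2 * e = C * (z - O) := by
      intro z hz
      have A := circ_eq (h1 z hz)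
      have B := circ_eq (h2 z hz)
      have hzO' : z - O' = (z - O) - e := by rw [he_def]; ring
      rw [hzO', map_sub] at B
      linear_combination ((z - O) - e) * A - (z - O) * B
    have h6 : ∀ a b : ℂ, a ∈ S → b ∈ S → a ≠ b →
        conj' e * ((a - O) + (b - O)) = C := by
      intro a b ha hb hab
      have hd : (a - O) - (b - O) ≠ 0 := by
        intro h; apply hab; have : a - b = 0 := by linear_combination h
        exact sub_eq_zero.mp this
      apply mul_left_cancel₀ hd
      linear_combination key a ha - key b hb
    have e12 := h6 z₁ z₂ hz₁ hz₂ h12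
    have e13 := h6 z₁ z₃ hz₁ hz₃ h13
    have hzz : conj' e * ((z₂ - O) - (z₃ - O)) = 0 := by linear_combination e12 - e13
    have h0 : (z₂ - O) - (z₃ - O) = 0 := by
      rcases mul_eq_zero.mp hzz with h | h
      · exact absurd h hce
      · exact h
    exact h23 (by linear_combination h0)
  refine ⟨hOO, ?_⟩
  have := h2 z₁ hz₁
  rw [hOO, h1 z₁ hz₁] at this
  exact this.symm

lemma isom_classify (f : ℂ → ℂ)
    (hf : ∀ z w, ‖f z - f w‖ = ‖z - w‖) (h0 : f 0 = 0) :
    ∃ u : ℂ, ‖u‖ = 1 ∧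
      ((∀ z, f z = u * z) ∨ (∀ z, f z = u * conj' z)) := by
  have key : ∀ z w, (f z - f w) * conj' (f z - f w) = (z - w) * conj' (z - w) := by
    intro z w
    rw [Complex.mul_conj, Complex.mul_conj, ← Complex.sq_norm, ← Complex.sq_norm, hf]
  have hn : ∀ z, f z * conj' (f z) = z * conj' z := by
    intro z; simpa [h0] using key z 0
  have hinner : ∀ z w, f z * conj' (f w) + conj' (f z) * f w = z * conj' w + conj' z * w := by
    intro z w
    have h1 := key z w
    have h2 := hn z; have h3 := hn w
    simp only [map_sub] at h1
    linear_combination h2 + h3 - h1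
  set u := f 1 with hu_def
  set a := f Complex.I with ha_def
  have huu : u * conj' u = 1 := by simpa using hn 1
  have haa : a * conj' a = 1 := by
    have := hn Complex.I
    simp only [Complex.conj_I] at this
    rw [this]; ring_nf; rw [Complex.I_sq]; ring
  have hmix : a * conj' u + conj' a * u = 0 := by
    have := hinner Complex.I 1
    simp only [map_one, Complex.conj_I, mul_one] at this
    rw [this]; ring
  have habs_u : ‖u‖ = 1 := by
    have h1 : ((Complex.normSq u : ℝ) : ℂ) = 1 := by rw [← Complex.mul_conj]; exact huu
    have h2 : Complex.normSq u = 1 := by exact_mod_cast h1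
    rw [Complex.norm_def, h2, Real.sqrt_one]
  have hsq_t : (a * conj' u) * (a * conj' u) = -1 := by
    linear_combination (a * conj' u) * hmix - (u * conj' u) * haa - huu
  have hfact : (a * conj' u - Complex.I) * (a * conj' u + Complex.I) = 0 := by
    linear_combination hsq_t - Complex.I_sq
  rcases mul_eq_zero.mp hfact with ht | ht
  · have ha_eq : a = Complex.I * u := by linear_combination u * ht - a * huu
    refine ⟨u, habs_u, Or.inl fun z => ?_⟩
    have e1 := hinner z 1
    simp only [map_one, mul_one, ← hu_def] at e1
    have e2 := hinner z Complex.I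
    rw [← ha_def, ha_eq] at e2
    simp only [map_mul, map_neg, Complex.conj_I] at e2
    have hs : f z * conj' u = z := by
      linear_combination e1/2 + Complex.I * e2/2 +
        ((f z * conj' u - conj' (f z) * u - z + conj' z)/2) * Complex.I_sq
    linear_combination u * hs - f z * huu
  · have ha_eq : a = -Complex.I * u := by linear_combination u * ht - a * huu
    refine ⟨u, habs_u, Or.inr fun z => ?_⟩
    have e1 := hinner z 1
    simp only [map_one, mul_one, ← hu_def] at e1
    have e2 := hinner z Complex.I
    rw [← ha_def, ha_eq] at e2
    simp only [map_mul, map_neg, Complex.conj_I] at e2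
    have hs : f z * conj' u = conj' z := by
      linear_combination e1/2 - Complex.I * e2/2 +
        ((f z * conj' u - conj' (f z) * u + z - conj' z)/2) * Complex.I_sq
    linear_combination u * hs - f z * huu

lemma sim_classify {f : ℂ → ℂ} (hf : IsSimilarity f) :
    ∃ a b : ℂ, a ≠ 0 ∧
      ((∀ z, f z = a * z + b) ∨ (∀ z, f z = a * conj' z + b)) := by
  obtain ⟨hbij, k, hk, hd⟩ := hf
  have hk' : (k : ℂ) ≠ 0 := by exact_mod_cast hk.ne'
  have hg : ∀ z w, ‖(f z - f 0) / k - (f w - f 0) / k‖ = ‖z - w‖ := by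
    intro z w
    rw [div_sub_div_same, sub_sub_sub_cancel_right, norm_div, hd]
    simp [Complex.norm_real, abs_of_pos hk]
    field_simp
  have hg0 : (f 0 - f 0) / (k : ℂ) = 0 := by simp
  obtain ⟨u, hu, hcase⟩ := isom_classify (fun z => (f z - f 0) / k) hg hg0
  have hune : u ≠ 0 := by intro h; rw [h] at hu; simp at hu
  refine ⟨k * u, f 0, mul_ne_zero hk' hune, ?_⟩
  rcases hcase with h | h
  · refine Or.inl fun z => ?_
    have hz := h z
    rw [div_eq_iff hk'] at hz
    linear_combination hz
  · refine Or.inr fun z => ?_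
    have hz := h z
    rw [div_eq_iff hk'] at hz
    linear_combination hz

/-- The relation "equal up to a label-preserving similarity". -/
def Rel (p q : Cfg) : Prop :=
  ∃ f : ℂ → ℂ, IsSimilarity f ∧ f '' p.1 = q.1 ∧ ∀ v ∈ p.1, q.2 (f v) = p.2 v

lemma rel_equiv : Equivalence Rel := by
  constructor
  · exact fun p => ⟨id, sim_id, image_id _, fun v _ => rfl⟩
  · rintro p q ⟨f, hf, himg, hlab⟩
    have hli := leftInverse_invFun hf.1.1
    refine ⟨invFun f, sim_inv hf, ?_, ?_⟩
    · rw [← himg, ← image_comp]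
      have : invFun f ∘ f = id := funext hli
      rw [this, image_id]
    · intro v hv
      rw [← himg] at hv
      obtain ⟨w, hw, rfl⟩ := hv
      rw [hli w]
      exact (hlab w hw).symm
  · rintro p q s ⟨f, hf, himg, hlab⟩ ⟨g, hg, himg', hlab'⟩
    refine ⟨g ∘ f, sim_comp hf hg, by rw [image_comp, himg, himg'], fun v hv => ?_⟩
    have : f v ∈ q.1 := by rw [← himg]; exact mem_image_of_mem f hv
    rw [comp_apply, hlab' (f v) this, hlab v hv]

instance st : Setoid Cfg := ⟨Rel, rel_equiv⟩

def rep (p : Cfg) : Cfg := (Quotient.mk st p).out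

lemma rel_rep (p : Cfg) : Rel (rep p) p := Quotient.mk_out p

lemma rep_eq_of_rel {p q : Cfg} (h : Rel p q) : rep p = rep q := by
  unfold rep; rw [Quotient.sound (h : st.r p q)]

lemma simsym_form {p : Cfg} {O : ℂ} {r : ℝ} (h3 : 3 ≤ p.1.ncard) (hr : 0 < r)
    (hcirc : ∀ z ∈ p.1, ‖z - O‖ = r) {f : ℂ → ℂ} (hf : SimSym f p) :
    ∃ u : ℂ, ‖u‖ = 1 ∧
      ((∀ z, f z = O + u * (z - O)) ∨ (∀ z, f z = O + u * conj' (z - O))) := by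
  obtain ⟨a, b, ha, hcase⟩ := sim_classify hf.1
  have hsub : ∀ z, ‖f z - f O‖ = ‖a‖ * ‖z - O‖ := by
    intro z
    rcases hcase with h | h
    · rw [h z, h O]
      rw [show a * z + b - (a * O + b) = a * (z - O) by ring, norm_mul]
    · rw [h z, h O]
      rw [show a * conj' z + b - (a * conj' O + b) = a * (conj' z - conj' O) by ring,
        norm_mul, ← map_sub, Complex.norm_conj]
  have hcirc' : ∀ w ∈ p.1, ‖w - f O‖ = ‖a‖ * r := by
    intro w hw
    rw [← hf.2.1] at hw
    obtain ⟨z, hz, rfl⟩ := hw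
    rw [hsub z, hcirc z hz]
  have hapos : 0 < ‖a‖ := norm_pos_iff.mpr ha
  obtain ⟨hO, hrr⟩ := circle_unique h3 hr (mul_pos hapos hr) hcirc hcirc'
  have habs : ‖a‖ = 1 :=
    mul_right_cancel₀ hr.ne' (hrr.trans (one_mul r).symm)
  refine ⟨a, habs, ?_⟩
  rcases hcase with h | h
  · refine Or.inl fun z => ?_
    have hb : a * O + b = O := by rw [← h O]; exact hO
    rw [h z]; linear_combination hb
  · refine Or.inr fun z => ?_
    have hb : a * conj' O + b = O := by rw [← h O]; exact hO
    rw [h z, map_sub]; linear_combination hb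

lemma rotSym_transfer {p q : Cfg} {f : ℂ → ℂ} (hsim : IsSimilarity f)
    (himg : f '' q.1 = p.1) (hlab : ∀ v ∈ q.1, p.2 (f v) = q.2 v)
    {O' O : ℂ} (hO : f O' = O) (h : RotSym q O') : RotSym p O := by
  obtain ⟨u, hu1, hune, himgR, hlabR⟩ := h
  obtain ⟨a, b, ha, hcase⟩ := sim_classify hsim
  rcases hcase with hfe | hfe
  · have hb : a * O' + b = O := by rw [← hfe O']; exact hO
    have hcomm : ∀ z, O + u * (f z - O) = f (O' + u * (z - O')) := by
      intro z
      rw [hfe z, hfe (O' + u * (z - O'))]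
      linear_combination (u - 1) * hb
    refine ⟨u, hu1, hune, ?_, ?_⟩
    · rw [← himg, ← image_comp,
        show ((fun z => O + u * (z - O)) ∘ f) = f ∘ (fun z => O' + u * (z - O')) from
          funext fun z => hcomm z,
        image_comp, himgR, himg]
    · intro v hv
      rw [← himg] at hv
      obtain ⟨w, hw, rfl⟩ := hv
      have hrw : O' + u * (w - O') ∈ q.1 := by rw [← himgR]; exact mem_image_of_mem _ hw
      rw [hcomm w, hlab _ hrw, hlabR w hw, ← hlab w hw]
  · have hb : a * conj' O' + b = O := by rw [← hfe O']; exact hO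
    have hcomm : ∀ z, O + conj' u * (f z - O) = f (O' + u * (z - O')) := by
      intro z
      rw [hfe z, hfe (O' + u * (z - O'))]
      simp only [map_add, map_mul, map_sub]
      linear_combination (conj' u - 1) * hb
    have hu1' : ‖conj' u‖ = 1 := by rw [Complex.norm_conj]; exact hu1
    have hune' : conj' u ≠ 1 := by
      intro hc; apply hune
      have := congrArg conj' hc
      simpa using this
    refine ⟨conj' u, hu1', hune', ?_, ?_⟩
    · rw [← himg, ← image_comp,
        show ((fun z => O + conj' u * (z - O)) ∘ f) = f ∘ (fun z => O' + u * (z - O')) from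
          funext fun z => hcomm z,
        image_comp, himgR, himg]
    · intro v hv
      rw [← himg] at hv
      obtain ⟨w, hw, rfl⟩ := hv
      have hrw : O' + u * (w - O') ∈ q.1 := by rw [← himgR]; exact mem_image_of_mem _ hw
      rw [hcomm w, hlab _ hrw, hlabR w hw, ← hlab w hw]

/-- The key pointwise existence: a canonical point for each configuration. -/
lemma exists_pt (n : ℕ) (hn : 3 ≤ n) (p : Cfg) :
    ∃ x : ℂ, ∀ (O : ℂ) (r : ℝ), 0 < r → (∀ z ∈ p.1, ‖z - O‖ = r) →
      p.1.ncard = n →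
      (‖x - O‖ = r ∨ x = O) ∧
      (x = O ↔ RotSym p O) ∧
      (∀ f : ℂ → ℂ, SimSym f p → f x = x) := by
  by_cases hg : ∃ O : ℂ, ∃ r : ℝ, 0 < r ∧ (∀ z ∈ p.1, ‖z - O‖ = r) ∧
      p.1.ncard = n
  swap
  · exact ⟨0, fun O r hr hc hcd => absurd ⟨O, r, hr, hc, hcd⟩ hg⟩
  obtain ⟨O, r, hr, hcirc, hcard⟩ := hg
  have h3 : 3 ≤ p.1.ncard := hcard ▸ hn
  suffices h : ∃ x, (‖x - O‖ = r ∨ x = O) ∧ (x = O ↔ RotSym p O) ∧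
      (∀ f : ℂ → ℂ, SimSym f p → f x = x) by
    obtain ⟨x, hx⟩ := h
    refine ⟨x, fun O' r' hr' hc' _ => ?_⟩
    obtain ⟨hOO, hrr⟩ := circle_unique h3 hr hr' hcirc hc'
    rw [hOO, hrr]; exact hx
  by_cases hrot : RotSym p O
  · refine ⟨O, Or.inr rfl, by simp [hrot], fun f hf => ?_⟩
    obtain ⟨u, hu, hcase⟩ := simsym_form h3 hr hcirc hf
    rcases hcase with h | h
    · rw [h O]; ring
    · rw [h O]; simp
  · have dich : ∀ f : ℂ → ℂ, SimSym f p →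
        (∀ z, f z = z) ∨ ∃ u, ‖u‖ = 1 ∧ (∀ z, f z = O + u * conj' (z - O)) := by
      intro f hf
      obtain ⟨u, hu, hcase⟩ := simsym_form h3 hr hcirc hf
      rcases hcase with h | h
      · by_cases hu1 : u = 1
        · exact Or.inl fun z => by rw [h z, hu1]; ring
        · refine absurd ⟨u, hu, hu1, ?_, ?_⟩ hrot
          · rw [show (fun z => O + u * (z - O)) = f from funext fun z => (h z).symm]
            exact hf.2.1
          · intro v hv
            rw [show O + u * (v - O) = f v from (h v).symm]
            exact hf.2.2 v hv
      · exact Or.inr ⟨u, hu, h⟩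
    by_cases hrefl : ∃ f u, SimSym f p ∧ ‖u‖ = 1 ∧
        (∀ z, f z = O + u * conj' (z - O))
    · obtain ⟨f₀, u₀, hf₀, hu₀, hfe₀⟩ := hrefl
      have huniq : ∀ f u, SimSym f p → ‖u‖ = 1 →
          (∀ z, f z = O + u * conj' (z - O)) → u = u₀ := by
        intro f u hf hu hfe
        have hcompeq : ∀ z, f (f₀ z) = O + (u * conj' u₀) * (z - O) := by
          intro z
          rw [hfe₀ z, hfe (O + u₀ * conj' (z - O)), add_sub_cancel_left, map_mul,
            Complex.conj_conj]
          ring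
        have hU1 : u * conj' u₀ = 1 := by
          by_contra hUne
          refine absurd ⟨u * conj' u₀, ?_, hUne, ?_, ?_⟩ hrot
          · rw [norm_mul, Complex.norm_conj, hu₀, hu]; norm_num
          · rw [show (fun z => O + (u * conj' u₀) * (z - O)) = f ∘ f₀ from
              funext fun z => (hcompeq z).symm, image_comp, hf₀.2.1, hf.2.1]
          · intro v hv
            have hv' : f₀ v ∈ p.1 := by rw [← hf₀.2.1]; exact mem_image_of_mem _ hv
            rw [show O + (u * conj' u₀) * (v - O) = f (f₀ v) from (hcompeq v).symm,
              hf.2.2 _ hv', hf₀.2.2 v hv]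
        have hcc : u₀ * conj' u₀ = 1 := unit_mul_conj hu₀
        linear_combination u₀ * hU1 - u * hcc
      obtain ⟨w, hw⟩ := IsAlgClosed.exists_pow_nat_eq u₀ two_pos
      have hwabs : ‖w‖ = 1 := by
        have h1 : ‖w‖ ^ 2 = 1 := by rw [← norm_pow, hw, hu₀]
        have h2 : (‖w‖ - 1) * (‖w‖ + 1) = 0 := by nlinarith
        rcases mul_eq_zero.mp h2 with h | h
        · linarith
        · nlinarith [norm_nonneg w]
      have hwne : w ≠ 0 := by intro h; rw [h] at hwabs; simp at hwabs
      have hxO : ‖(O + (r : ℂ) * w) - O‖ = r := by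
        rw [add_sub_cancel_left, norm_mul, Complex.norm_real, Real.norm_eq_abs, abs_of_pos hr, hwabs, mul_one]
      have hxne : O + (r : ℂ) * w ≠ O := by
        intro h
        have h2 : (r : ℂ) * w = 0 := by linear_combination h
        rcases mul_eq_zero.mp h2 with h | h
        · exact hr.ne' (by exact_mod_cast h)
        · exact hwne h
      refine ⟨O + (r : ℂ) * w, Or.inl hxO, ⟨fun h => absurd h hxne, fun h => absurd h hrot⟩,
        fun f hf => ?_⟩
      rcases dich f hf with h | ⟨u, hu, hfe⟩
      · exact h _
      · have hu₀' : u = u₀ := huniq f u hf hu hfe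
        rw [hfe _, hu₀', add_sub_cancel_left, map_mul, Complex.conj_ofReal]
        have hwc : w * conj' w = 1 := unit_mul_conj hwabs
        have hkey : u₀ * conj' w = w := by
          rw [pow_two] at hw
          linear_combination (-(conj' w)) * hw + w * hwc
        linear_combination (r : ℂ) * hkey
    · refine ⟨O + (r : ℂ), Or.inl ?_, ⟨fun h => ?_, fun h => absurd h hrot⟩, fun f hf => ?_⟩
      · rw [add_sub_cancel_left, Complex.norm_real, Real.norm_eq_abs, abs_of_pos hr]
      · exfalso
        have h2 : (r : ℂ) = 0 := by linear_combination h
        exact hr.ne' (by exact_mod_cast h2)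
      · rcases dich f hf with h | ⟨u, hu, hfe⟩
        · exact h _
        · exact absurd ⟨f, u, hf, hu, hfe⟩ hrefl

end Stmt5Aux

open Stmt5Aux Function Set

/-- Labelled version of the First Step Problem: for every `n ≥ 3` there is a
function `B` on labelled `n`-element subsets `(S, ℓ)` of ℂ lying on a common
circle (center `O`, radius `r`) such that `B S ℓ ∈ c ∪ {O}`, `B S ℓ = O` iff
some nontrivial rotation about `O` maps `S` onto itself preserving labels, and
`B` commutes with similarities (a similarity `f` acting on the labelled set
`(S, ℓ)` gives `(f '' S, ℓ ∘ f⁻¹)`). -/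
theorem stmt5 (n : ℕ) (hn : 3 ≤ n) :
    ∃ B : Set ℂ → (ℂ → ℕ) → ℂ,
      ∀ (S : Set ℂ) (ℓ : ℂ → ℕ) (O : ℂ) (r : ℝ), S.ncard = n → 0 < r →
        (∀ z ∈ S, ‖z - O‖ = r) →
        (‖B S ℓ - O‖ = r ∨ B S ℓ = O) ∧
        (B S ℓ = O ↔ ∃ u : ℂ, ‖u‖ = 1 ∧ u ≠ 1 ∧
            (fun z => O + u * (z - O)) '' S = S ∧
            ∀ v ∈ S, ℓ (O + u * (v - O)) = ℓ v) ∧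
        (∀ f : ℂ → ℂ, IsSimilarity f →
          B (f '' S) (ℓ ∘ Function.invFun f) = f (B S ℓ)) := by
  classical
  refine ⟨fun S ℓ =>
    Classical.choose (rel_rep (S, ℓ)) (Classical.choose (exists_pt n hn (rep (S, ℓ)))), ?_⟩
  intro S ℓ O r hcard hr hcirc
  obtain ⟨hf₀sim, hf₀img, hf₀lab⟩ := Classical.choose_spec (rel_rep (S, ℓ))
  set f₀ : ℂ → ℂ := Classical.choose (rel_rep (S, ℓ)) with hf₀_def
  set q : Cfg := rep (S, ℓ) with hq_def
  set x : ℂ := Classical.choose (exists_pt n hn q) with hx_def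
  obtain ⟨hbij, k, hk, hd⟩ := hf₀sim
  have hf₀sim' : IsSimilarity f₀ := ⟨hbij, k, hk, hd⟩
  set O' : ℂ := invFun f₀ O with hO'_def
  have hgO : f₀ O' = O := rightInverse_invFun hbij.2 O
  have hq_circ : ∀ z ∈ q.1, ‖z - O'‖ = r / k := by
    intro z hz
    have hfz : f₀ z ∈ S := by
      have : f₀ z ∈ f₀ '' q.1 := mem_image_of_mem f₀ hz
      rw [hf₀img] at this; exact this
    have h1 : ‖f₀ z - f₀ O'‖ = k * ‖z - O'‖ := hd z O'
    rw [hgO, hcirc _ hfz] at h1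
    field_simp [h1.symm]
    linarith [h1]
  have hq_card : q.1.ncard = n := by
    rw [← Set.ncard_image_of_injective q.1 hbij.1, hf₀img]; exact hcard
  have hrk : 0 < r / k := div_pos hr hk
  obtain ⟨hA, hB, hC⟩ :=
    Classical.choose_spec (exists_pt n hn q) O' (r / k) hrk hq_circ hq_card
  refine ⟨?_, ?_, ?_⟩
  · rcases hA with h | h
    · left
      show ‖f₀ x - O‖ = r
      rw [← hgO, hd, h]
      field_simp
    · right
      show f₀ x = O
      rw [show x = O' from h]; exact hgO
  · show f₀ x = O ↔ _
    constructor
    · intro h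
      have hx' : x = O' := hbij.1 (h.trans hgO.symm)
      exact rotSym_transfer hf₀sim' hf₀img hf₀lab hgO (hB.mp hx')
    · intro h
      have himg' : invFun f₀ '' (S, ℓ).1 = q.1 := by
        rw [← hf₀img, ← image_comp]
        have : invFun f₀ ∘ f₀ = id := funext (leftInverse_invFun hbij.1)
        rw [this, image_id]
      have hlab' : ∀ v ∈ (S, ℓ).1, q.2 (invFun f₀ v) = (S, ℓ).2 v := by
        intro v hv
        rw [← hf₀img] at hv
        obtain ⟨w, hw, rfl⟩ := hv
        rw [leftInverse_invFun hbij.1 w]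
        exact (hf₀lab w hw).symm
      have hrq : RotSym q O' :=
        rotSym_transfer (sim_inv hf₀sim') himg' hlab' rfl h
      show f₀ x = O
      rw [show x = O' from hB.mpr hrq]; exact hgO
  · intro f hfsim
    have hrelpp' : Rel (S, ℓ) (f '' S, ℓ ∘ invFun f) := by
      refine ⟨f, hfsim, rfl, fun v hv => ?_⟩
      simp only [comp_apply]
      rw [leftInverse_invFun hfsim.1.1 v]
    have hrep : rep (f '' S, ℓ ∘ invFun f) = q := (rep_eq_of_rel hrelpp').symm
    obtain ⟨hf₁sim, hf₁img, hf₁lab⟩ := Classical.choose_spec (rel_rep (f '' S, ℓ ∘ invFun f))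
    set f₁ : ℂ → ℂ := Classical.choose (rel_rep (f '' S, ℓ ∘ invFun f)) with hf₁_def
    set x' : ℂ := Classical.choose (exists_pt n hn (rep (f '' S, ℓ ∘ invFun f))) with hx'_def
    have hx'x : x' = x := by rw [hx'_def, hx_def, hrep]
    show f₁ x' = f (f₀ x)
    rw [hx'x]
    rw [hrep] at hf₁img hf₁lab
    have hsymm : SimSym (invFun f₁ ∘ (f ∘ f₀)) q := by
      refine ⟨sim_comp (sim_comp hf₀sim' hfsim) (sim_inv hf₁sim), ?_, ?_⟩
      · rw [image_comp, image_comp, hf₀img]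
        show invFun f₁ '' (f '' (S, ℓ).1) = q.1
        have : f '' (S, ℓ).1 = (f '' S, ℓ ∘ invFun f).1 := rfl
        rw [this, ← hf₁img, ← image_comp]
        have hid : invFun f₁ ∘ f₁ = id := funext (leftInverse_invFun hf₁sim.1.1)
        rw [hid, image_id]
      · intro v hv
        have hv0 : f₀ v ∈ S := by
          have : f₀ v ∈ f₀ '' q.1 := mem_image_of_mem f₀ hv
          rw [hf₀img] at this; exact this
        have hvw : f (f₀ v) ∈ (f '' S, ℓ ∘ invFun f).1 := mem_image_of_mem f hv0
        have hvq : invFun f₁ (f (f₀ v)) ∈ q.1 := by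
          rw [← hf₁img] at hvw
          obtain ⟨w, hw, hww⟩ := hvw
          rw [← hww, leftInverse_invFun hf₁sim.1.1 w]
          exact hw
        have h1 := hf₁lab _ hvq
        rw [rightInverse_invFun hf₁sim.1.2 (f (f₀ v))] at h1
        show q.2 (invFun f₁ (f (f₀ v))) = q.2 v
        rw [← h1]
        show (ℓ ∘ invFun f) (f (f₀ v)) = q.2 v
        simp only [comp_apply]
        rw [leftInverse_invFun hfsim.1.1 (f₀ v)]
        exact hf₀lab v hv
    have hfix := hC _ hsymm
    simp only [comp_apply] at hfix
    have := congrArg f₁ hfix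
    rw [rightInverse_invFun hf₁sim.1.2 (f (f₀ x))] at this
    exact this.symm
end
end

section
/- (Existence of the center of rotational asymmetry for multisets.) For every n ≥ 1 there exists an n-multiset center X̃, defined on the family of all n-multisets of points of ℂ, such that for every n-multiset P: X̃(P) equals the centroid of P if and only if Fix(P) consists of exactly one point. -/
noncomputable section

/-- An isometry of the plane: a similarity with ratio 1. -/
def IsPlaneIsometry (f : ℂ → ℂ) : Prop :=
  Function.Bijective f ∧ ∀ z w : ℂ, ‖f z - f w‖ = ‖z - w‖

/-- The set of points fixed by every symmetry of the multiset `P`. -/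
def FixMultiset (P : Multiset ℂ) : Set ℂ :=
  {x | ∀ T : ℂ → ℂ, IsPlaneIsometry T → Multiset.map T P = P → T x = x}



section Aux
open Complex Finset
open scoped Classical


/-- Classification of plane isometries. -/
theorem isom_form (T : ℂ → ℂ) (hT : Function.Bijective T ∧ ∀ z w : ℂ, ‖T z - T w‖ = ‖z - w‖) :
    ∃ a b : ℂ, ‖a‖ = 1 ∧
      ((∀ z, T z = a * z + b) ∨ (∀ z, T z = a * (starRingEnd ℂ) z + b)) := by
  obtain ⟨hbij, hdist⟩ := hT
  let e : ℂ ≃ᵢ ℂ :=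
    { toEquiv := Equiv.ofBijective T hbij
      isometry_toFun := Isometry.of_dist_eq fun z w => by
        simp [Complex.dist_eq, hdist, Equiv.ofBijective] }
  obtain ⟨a, ha⟩ := linear_isometry_complex e.toRealLinearIsometryEquiv
  have key : ∀ z, T z - T 0 = e.toRealLinearIsometryEquiv z := fun z => by
    rw [IsometryEquiv.toRealLinearIsometryEquiv_apply]; rfl
  refine ⟨a, T 0, Circle.norm_coe a, ?_⟩
  rcases ha with h | h
  · left; intro z
    have := key z
    rw [h, rotation_apply] at this
    linear_combination this
  · right; intro z
    have := key z
    rw [h] at this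
    simp only [LinearIsometryEquiv.trans_apply, conjLIE_apply, rotation_apply] at this
    linear_combination this



theorem sim_form (f : ℂ → ℂ)
    (hf : Function.Bijective f ∧ ∃ r : ℝ, 0 < r ∧
      ∀ z w : ℂ, ‖f z - f w‖ = r * ‖z - w‖) :
    ∃ a b : ℂ, a ≠ 0 ∧
      ((∀ z, f z = a * z + b) ∨ (∀ z, f z = a * (starRingEnd ℂ) z + b)) := by
  obtain ⟨hbij, r, hr, hd⟩ := hf
  have hr0 : (r : ℂ) ≠ 0 := by exact_mod_cast hr.ne'
  set T : ℂ → ℂ := fun z => (f z - f 0) / r with hTdef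
  have hTbij : Function.Bijective T := by
    have h1 : Function.Bijective (fun z : ℂ => (z - f 0) / r) := by
      constructor
      · intro x y h
        field_simp at h
        simpa using h
      · intro y; exact ⟨y * r + f 0, by field_simp; ring⟩
    exact h1.comp hbij
  have hTd : ∀ z w, ‖T z - T w‖ = ‖z - w‖ := by
    intro z w
    have : T z - T w = (f z - f w) / r := by rw [hTdef]; ring
    rw [this, norm_div, hd, Complex.norm_real, Real.norm_of_nonneg hr.le]
    field_simp
  obtain ⟨a, b, ha1, hcase⟩ := isom_form T ⟨hTbij, hTd⟩
  have ha0 : (r : ℂ) * a ≠ 0 := mul_ne_zero hr0 (by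
    intro h; rw [h] at ha1; simp at ha1)
  have hf' : ∀ z, f z = r * T z + f 0 := fun z => by rw [hTdef]; field_simp; ring
  refine ⟨r * a, r * b + f 0, ha0, ?_⟩
  rcases hcase with h | h
  · left; intro z; rw [hf', h z]; ring
  · right; intro z; rw [hf', h z]; ring

def psums (s : Multiset ℂ) (k : ℕ) : ℂ := (s.map (· ^ k)).sum

lemma exists_fn (s : Multiset ℂ) : ∃ f : Fin s.toList.length → ℂ,
    (Finset.univ.val.map f) = s := by
  refine ⟨s.toList.get, ?_⟩
  have h1 : (Finset.univ : Finset (Fin s.toList.length)).val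
      = ↑(List.finRange s.toList.length) := rfl
  rw [h1, Multiset.map_coe, ← List.ofFn_eq_map, List.ofFn_get]
  exact s.coe_toList

lemma newton_multiset (s : Multiset ℂ) (k : ℕ) :
    (k : ℂ) * s.esymm k = (-1) ^ (k + 1) *
      ∑ a ∈ (antidiagonal k).filter (fun a => a.1 < k),
        (-1) ^ a.1 * s.esymm a.1 * psums s a.2 := by
  obtain ⟨f, hf⟩ := exists_fn s
  have := congrArg (MvPolynomial.aeval f) (MvPolynomial.mul_esymm_eq_sum (Fin s.toList.length) ℂ k)
  simp only [map_mul, map_natCast, map_pow, map_neg, map_one, map_sum,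
    MvPolynomial.aeval_esymm_eq_multiset_esymm, hf] at this
  rw [this]
  congr 1
  refine Finset.sum_congr rfl fun a _ => ?_
  have hps : MvPolynomial.aeval f (MvPolynomial.psum (Fin s.toList.length) ℂ a.2) = psums s a.2 := by
    simp only [MvPolynomial.psum, map_sum, map_pow, MvPolynomial.aeval_X]
    rw [psums]
    conv_rhs => rw [← hf]
    rw [Multiset.map_map]
    rfl
  simp [hps]





theorem psums_inj (s t : Multiset ℂ) (hcard : Multiset.card s = Multiset.card t)
    (h : ∀ k, 1 ≤ k → k ≤ Multiset.card s → psums s k = psums t k) : s = t := by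
  have hesymm : ∀ k, k ≤ Multiset.card s → s.esymm k = t.esymm k := by
    intro k
    induction k using Nat.strong_induction_on with
    | _ k ih =>
      intro hk
      rcases Nat.eq_zero_or_pos k with h0 | hpos
      · subst h0; simp [Multiset.esymm]
      · have hk0 : (k : ℂ) ≠ 0 := Nat.cast_ne_zero.mpr hpos.ne'
        have hs := newton_multiset s k
        have ht := newton_multiset t k
        have heq : ∑ a ∈ (antidiagonal k).filter (fun a => a.1 < k),
            (-1 : ℂ) ^ a.1 * s.esymm a.1 * psums s a.2 =
            ∑ a ∈ (antidiagonal k).filter (fun a => a.1 < k),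
            (-1 : ℂ) ^ a.1 * t.esymm a.1 * psums t a.2 := by
          refine Finset.sum_congr rfl fun a ha => ?_
          simp only [Finset.mem_filter, Finset.mem_antidiagonal] at ha
          obtain ⟨hsum, hlt⟩ := ha
          have hsum' : a.1 + a.2 = k := by simpa using hsum
          rw [ih a.1 hlt (le_trans hlt.le hk),
            h a.2 (by omega) (by omega)]
        have : (k : ℂ) * s.esymm k = (k : ℂ) * t.esymm k := by
          rw [hs, ht, heq]
        exact mul_left_cancel₀ hk0 this
  have hprod : (s.map fun r => Polynomial.X - Polynomial.C r).prod
      = (t.map fun r => Polynomial.X - Polynomial.C r).prod := by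
    rw [Multiset.prod_X_sub_X_eq_sum_esymm, Multiset.prod_X_sub_X_eq_sum_esymm, ← hcard]
    refine Finset.sum_congr rfl fun j hj => ?_
    rw [hesymm j (by simpa using Nat.lt_succ_iff.mp (Finset.mem_range.mp hj))]
  have := congrArg Polynomial.roots hprod
  rwa [Polynomial.roots_multiset_prod_X_sub_C, Polynomial.roots_multiset_prod_X_sub_C] at this

theorem exists_bez (S : Finset ℕ) : ∃ c : ℕ → ℤ, ∑ k ∈ S, c k * k = S.gcd id := by
  classical
  induction S using Finset.induction with
  | empty => exact ⟨fun _ => 0, by simp⟩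
  | @insert a S ha ih =>
    obtain ⟨c, hc⟩ := ih
    have hgcd : (insert a S).gcd id = Nat.gcd a (S.gcd id) := by
      rw [Finset.gcd_insert]; rfl
    set g : ℕ := S.gcd id
    refine ⟨fun k => if k = a then Nat.gcdA a g else Nat.gcdB a g * c k, ?_⟩
    rw [Finset.sum_insert ha]
    simp only [if_pos rfl]
    have hrest : ∑ k ∈ S, (if k = a then Nat.gcdA a g else Nat.gcdB a g * c k) * (k : ℤ)
        = Nat.gcdB a g * ∑ k ∈ S, c k * k := by
      rw [Finset.mul_sum]
      refine Finset.sum_congr rfl fun k hk => ?_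
      rw [if_neg (by rintro rfl; exact ha hk)]
      ring
    rw [hrest, hc, hgcd]
    have := Nat.gcd_eq_gcd_ab a g
    push_cast
    linarith [this]



def cen (P : Multiset ℂ) : ℂ := P.sum / (Multiset.card P : ℂ)

def mom (P : Multiset ℂ) (k : ℕ) : ℂ := (P.map (fun z => (z - cen P) ^ k)).sum

def momS (P : Multiset ℂ) : Finset ℕ :=
  (Finset.Icc 1 (Multiset.card P)).filter (fun k => mom P k ≠ 0)

def bez (S : Finset ℕ) : ℕ → ℤ := Classical.choose (exists_bez S)

lemma bez_spec (S : Finset ℕ) : ∑ k ∈ S, bez S k * k = S.gcd id :=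
  Classical.choose_spec (exists_bez S)

def vP (P : Multiset ℂ) : ℂ := ∏ k ∈ momS P, mom P k ^ bez (momS P) k

def Xc (P : Multiset ℂ) : ℂ := cen P + if (momS P).gcd id = 1 then vP P else 0

lemma mem_momS {P : Multiset ℂ} {k : ℕ} (hk : k ∈ momS P) : mom P k ≠ 0 :=
  (Finset.mem_filter.mp hk).2

lemma vP_ne_zero (P : Multiset ℂ) : vP P ≠ 0 :=
  Finset.prod_ne_zero_iff.mpr (fun k hk => zpow_ne_zero _ (mem_momS hk))

-- sums of affine images
lemma sum_map_affine (P : Multiset ℂ) (a b : ℂ) :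
    (P.map (fun z => a * z + b)).sum = a * P.sum + (Multiset.card P : ℂ) * b := by
  induction P using Multiset.induction with
  | empty => simp
  | cons z P ih =>
    simp only [Multiset.map_cons, Multiset.sum_cons, Multiset.card_cons, ih]
    push_cast
    ring

lemma sum_map_conj (P : Multiset ℂ) :
    (P.map (fun z => (starRingEnd ℂ) z)).sum = (starRingEnd ℂ) P.sum := by
  exact (map_multiset_sum (starRingEnd ℂ) P).symm

lemma cen_affine (P : Multiset ℂ) (hP : Multiset.card P ≠ 0) (a b : ℂ) :
    cen (P.map (fun z => a * z + b)) = a * cen P + b := by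
  have hc : (Multiset.card P : ℂ) ≠ 0 := Nat.cast_ne_zero.mpr hP
  rw [cen, Multiset.card_map, sum_map_affine, cen]
  field_simp

lemma cen_anti (P : Multiset ℂ) (hP : Multiset.card P ≠ 0) (a b : ℂ) :
    cen (P.map (fun z => a * (starRingEnd ℂ) z + b)) = a * (starRingEnd ℂ) (cen P) + b := by
  have hc : (Multiset.card P : ℂ) ≠ 0 := Nat.cast_ne_zero.mpr hP
  have : (P.map (fun z => a * (starRingEnd ℂ) z + b))
      = ((P.map (fun z => (starRingEnd ℂ) z)).map (fun z => a * z + b)) := by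
    rw [Multiset.map_map]; rfl
  rw [this, cen_affine _ (by simpa using hP), cen, cen, Multiset.card_map, sum_map_conj, map_div₀]
  simp

lemma mom_affine (P : Multiset ℂ) (hP : Multiset.card P ≠ 0) (a b : ℂ) (k : ℕ) :
    mom (P.map (fun z => a * z + b)) k = a ^ k * mom P k := by
  rw [mom, Multiset.map_map, cen_affine P hP a b, mom, ← Multiset.sum_map_mul_left]
  congr 1
  refine Multiset.map_congr rfl fun z _ => ?_
  simp only [Function.comp_apply]
  have h2 : a * z + b - (a * cen P + b) = a * (z - cen P) := by ring
  rw [h2, mul_pow]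

lemma mom_anti (P : Multiset ℂ) (hP : Multiset.card P ≠ 0) (a b : ℂ) (k : ℕ) :
    mom (P.map (fun z => a * (starRingEnd ℂ) z + b)) k = a ^ k * (starRingEnd ℂ) (mom P k) := by
  rw [mom, Multiset.map_map, cen_anti P hP a b, mom, map_multiset_sum,
    Multiset.map_map, ← Multiset.sum_map_mul_left]
  congr 1
  refine Multiset.map_congr rfl fun z _ => ?_
  simp only [Function.comp_apply]
  have h2 : a * (starRingEnd ℂ) z + b - (a * (starRingEnd ℂ) (cen P) + b)
      = a * (starRingEnd ℂ) (z - cen P) := by rw [map_sub]; ring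
  rw [h2, mul_pow, ← map_pow]

lemma momS_affine (P : Multiset ℂ) (hP : Multiset.card P ≠ 0) (a b : ℂ) (ha : a ≠ 0) :
    momS (P.map (fun z => a * z + b)) = momS P := by
  rw [momS, momS, Multiset.card_map]
  refine Finset.filter_congr fun k _ => ?_
  rw [mom_affine P hP a b k]
  simp [pow_ne_zero _ ha]

lemma momS_anti (P : Multiset ℂ) (hP : Multiset.card P ≠ 0) (a b : ℂ) (ha : a ≠ 0) :
    momS (P.map (fun z => a * (starRingEnd ℂ) z + b)) = momS P := by
  rw [momS, momS, Multiset.card_map]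
  refine Finset.filter_congr fun k _ => ?_
  rw [mom_anti P hP a b k]
  simp [pow_ne_zero _ ha]

lemma zpow_sum' (a : ℂ) (ha : a ≠ 0) (S : Finset ℕ) (e : ℕ → ℤ) :
    ∏ k ∈ S, a ^ e k = a ^ (∑ k ∈ S, e k) := by
  induction S using Finset.induction with
  | empty => simp
  | @insert i S hi ih => rw [Finset.prod_insert hi, Finset.sum_insert hi, ih, zpow_add₀ ha]

lemma prod_pow_bez (a : ℂ) (ha : a ≠ 0) (S : Finset ℕ) (hg : S.gcd id = 1) :
    ∏ k ∈ S, ((a ^ k : ℂ)) ^ bez S k = a := by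
  have h1 : ∀ k ∈ S, ((a ^ k : ℂ)) ^ bez S k = a ^ ((k : ℤ) * bez S k) := by
    intro k _
    rw [← zpow_natCast a k, ← zpow_mul]
  rw [Finset.prod_congr rfl h1, zpow_sum' a ha]
  have : ∑ k ∈ S, (k : ℤ) * bez S k = 1 := by
    have := bez_spec S
    rw [hg, Nat.cast_one] at this
    rw [← this]
    exact Finset.sum_congr rfl fun k _ => mul_comm _ _
  rw [this, zpow_one]

lemma vP_affine (P : Multiset ℂ) (hP : Multiset.card P ≠ 0) (a b : ℂ) (ha : a ≠ 0)
    (hg : (momS P).gcd id = 1) :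
    vP (P.map (fun z => a * z + b)) = a * vP P := by
  rw [vP, momS_affine P hP a b ha]
  have h1 : ∀ k ∈ momS P, mom (P.map (fun z => a * z + b)) k ^ bez (momS P) k
      = ((a ^ k) ^ bez (momS P) k) * (mom P k ^ bez (momS P) k) := by
    intro k _
    rw [mom_affine P hP a b k, mul_zpow]
  rw [Finset.prod_congr rfl h1, Finset.prod_mul_distrib, prod_pow_bez a ha _ hg, vP]

lemma vP_anti (P : Multiset ℂ) (hP : Multiset.card P ≠ 0) (a b : ℂ) (ha : a ≠ 0)
    (hg : (momS P).gcd id = 1) :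
    vP (P.map (fun z => a * (starRingEnd ℂ) z + b)) = a * (starRingEnd ℂ) (vP P) := by
  rw [vP, momS_anti P hP a b ha]
  have h1 : ∀ k ∈ momS P, mom (P.map (fun z => a * (starRingEnd ℂ) z + b)) k ^ bez (momS P) k
      = ((a ^ k) ^ bez (momS P) k) * (((starRingEnd ℂ) (mom P k)) ^ bez (momS P) k) := by
    intro k _
    rw [mom_anti P hP a b k, mul_zpow]
  rw [Finset.prod_congr rfl h1, Finset.prod_mul_distrib, prod_pow_bez a ha _ hg, vP, map_prod]
  congr 1
  exact Finset.prod_congr rfl fun k _ => (map_zpow₀ (starRingEnd ℂ) _ _).symm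

lemma Xc_affine (P : Multiset ℂ) (hP : Multiset.card P ≠ 0) (a b : ℂ) (ha : a ≠ 0) :
    Xc (P.map (fun z => a * z + b)) = a * Xc P + b := by
  rw [Xc, Xc, momS_affine P hP a b ha, cen_affine P hP a b]
  by_cases hg : (momS P).gcd id = 1
  · rw [if_pos hg, if_pos hg, vP_affine P hP a b ha hg]; ring
  · rw [if_neg hg, if_neg hg]; ring

lemma Xc_anti (P : Multiset ℂ) (hP : Multiset.card P ≠ 0) (a b : ℂ) (ha : a ≠ 0) :
    Xc (P.map (fun z => a * (starRingEnd ℂ) z + b)) = a * (starRingEnd ℂ) (Xc P) + b := by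
  rw [Xc, Xc, momS_anti P hP a b ha, cen_anti P hP a b]
  by_cases hg : (momS P).gcd id = 1
  · rw [if_pos hg, if_pos hg, vP_anti P hP a b ha hg, map_add]; ring
  · rw [if_neg hg, if_neg hg, map_add]; simp only [map_zero]; ring

lemma cen_def (P : Multiset ℂ) : cen P = P.sum / (Multiset.card P : ℂ) := rfl
lemma mom_def (P : Multiset ℂ) (k : ℕ) :
    mom P k = (P.map (fun z => (z - cen P) ^ k)).sum := rfl
lemma momS_def (P : Multiset ℂ) :
    momS P = (Finset.Icc 1 (Multiset.card P)).filter (fun k => mom P k ≠ 0) := rfl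
lemma Xc_def (P : Multiset ℂ) : Xc P = cen P + if (momS P).gcd id = 1 then vP P else 0 := rfl

















/-- every symmetry fixes the centroid -/
lemma cen_fixed (P : Multiset ℂ) (hP : Multiset.card P ≠ 0) (T : ℂ → ℂ)
    (hT : IsPlaneIsometry T) (hTP : Multiset.map T P = P) : T (cen P) = cen P := by
  obtain ⟨a, b, habs, hcase⟩ := isom_form T hT
  rcases hcase with h | h
  · have h1 : Multiset.map T P = Multiset.map (fun z => a * z + b) P :=
      Multiset.map_congr rfl fun z _ => h z
    have h2 : cen P = a * cen P + b := by
      conv_lhs => rw [← hTP, h1, cen_affine P hP a b]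
    rw [h (cen P)]
    exact h2.symm
  · have h1 : Multiset.map T P = Multiset.map (fun z => a * (starRingEnd ℂ) z + b) P :=
      Multiset.map_congr rfl fun z _ => h z
    have h2 : cen P = a * (starRingEnd ℂ) (cen P) + b := by
      conv_lhs => rw [← hTP, h1, cen_anti P hP a b]
    rw [h (cen P)]
    exact h2.symm

/-- the rotation-symmetry construction -/
lemma rot_sym (P : Multiset ℂ) (hP : Multiset.card P ≠ 0) (hg : (momS P).gcd id ≠ 1) :
    ∃ ζ : ℂ, ‖ζ‖ = 1 ∧ ζ ≠ 1 ∧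
      Multiset.map (fun z => cen P + ζ * (z - cen P)) P = P := by
  -- first get a suitable root of unity
  have hkey : ∃ ζ : ℂ, ‖ζ‖ = 1 ∧ ζ ≠ 1 ∧
      ∀ k, mom P k ≠ 0 → k ∈ Finset.Icc 1 (Multiset.card P) → ζ ^ k = 1 := by
    set d := (momS P).gcd id with hd
    by_cases hd0 : d = 0
    · refine ⟨-1, by simp, by norm_num, fun k hk hk' => ?_⟩
      exfalso
      have hkS : k ∈ momS P := by rw [momS_def]; exact Finset.mem_filter.mpr ⟨hk', hk⟩
      have := Finset.gcd_eq_zero_iff.mp hd0 k hkS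
      simp only [id] at this
      rw [this] at hk'
      simp at hk'
    · have prim := Complex.isPrimitiveRoot_exp d hd0
      set ζ := Complex.exp (2 * Real.pi * Complex.I / d) with hζ
      refine ⟨ζ, ?_, ?_, ?_⟩
      · have : (2 * Real.pi * Complex.I / d) = ((2 * Real.pi / d : ℝ) : ℂ) * Complex.I := by
          push_cast; ring
        rw [hζ, this, Complex.norm_exp_ofReal_mul_I]
      · intro h1
        have h2 : d ∣ 1 := prim.dvd_of_pow_eq_one 1 (by rw [pow_one, h1])
        have h3 : d = 1 := Nat.dvd_one.mp h2
        rw [hd] at h3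
        exact hg h3
      · intro k hk hk'
        have hkS : k ∈ momS P := by rw [momS_def]; exact Finset.mem_filter.mpr ⟨hk', hk⟩
        obtain ⟨m, rfl⟩ : d ∣ k := Finset.gcd_dvd hkS
        rw [pow_mul, prim.pow_eq_one, one_pow]
  obtain ⟨ζ, hζ1, hζne, hζk⟩ := hkey
  refine ⟨ζ, hζ1, hζne, ?_⟩
  set c := cen P with hc
  have h1 : (Multiset.map (fun z => c + ζ * (z - c)) P).map (fun z => z - c)
      = P.map (fun z => z - c) := by
    rw [Multiset.map_map]
    have h2 : ((fun z => z - c) ∘ fun z => c + ζ * (z - c)) = fun z => ζ * (z - c) := by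
      funext z; simp only [Function.comp_apply]; ring
    rw [h2]
    apply psums_inj
    · simp
    · intro k hk1 hk2
      simp only [Multiset.card_map] at hk2
      have hps1 : psums (P.map fun z => ζ * (z - c)) k = ζ ^ k * mom P k := by
        rw [psums, Multiset.map_map, mom_def]
        rw [← Multiset.sum_map_mul_left]
        congr 1
        refine Multiset.map_congr rfl fun z _ => ?_
        simp [mul_pow, hc]
      have hps2 : psums (P.map fun z => z - c) k = mom P k := by
        rw [psums, Multiset.map_map, mom_def]; rfl
      rw [hps1, hps2]
      by_cases hm : mom P k = 0
      · rw [hm]; ring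
      · rw [hζk k hm (Finset.mem_Icc.mpr ⟨hk1, hk2⟩), one_mul]
  have hinj : Function.Injective (fun z : ℂ => z - c) := fun x y h => by simpa using h
  exact Multiset.map_injective hinj h1

lemma rot_isom (c ζ : ℂ) (hζ1 : ‖ζ‖ = 1) :
    IsPlaneIsometry (fun z => c + ζ * (z - c)) := by
  have hζ0 : ζ ≠ 0 := by intro h; rw [h] at hζ1; simp at hζ1
  constructor
  · apply Function.bijective_iff_has_inverse.mpr
    refine ⟨fun z => c + ζ⁻¹ * (z - c), fun z => ?_, fun z => ?_⟩
    · field_simp; ring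
    · field_simp
      ring
  · intro z w
    have : c + ζ * (z - c) - (c + ζ * (w - c)) = ζ * (z - w) := by ring
    rw [this, norm_mul, hζ1, one_mul]

lemma fix_eq_of_sym (P : Multiset ℂ) (hP : Multiset.card P ≠ 0)
    (hg : (momS P).gcd id ≠ 1) : FixMultiset P = {cen P} := by
  obtain ⟨ζ, hζ1, hζne, hTP⟩ := rot_sym P hP hg
  ext x
  simp only [Set.mem_singleton_iff]
  constructor
  · intro hx
    have := hx _ (rot_isom (cen P) ζ hζ1) hTP
    have h2 : (ζ - 1) * (x - cen P) = 0 := by linear_combination this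
    rcases mul_eq_zero.mp h2 with h | h
    · exact absurd (by linear_combination h) hζne
    · linear_combination h
  · rintro rfl
    intro T hT hTP'
    exact cen_fixed P hP T hT hTP'

lemma isom_is_sim (T : ℂ → ℂ) (hT : IsPlaneIsometry T) : IsSimilarity T :=
  ⟨hT.1, 1, one_pos, fun z w => by rw [hT.2 z w, one_mul]⟩

lemma Xc_equivariant (P : Multiset ℂ) (hP : Multiset.card P ≠ 0) (f : ℂ → ℂ)
    (hf : IsSimilarity f) : Xc (Multiset.map f P) = f (Xc P) := by
  obtain ⟨a, b, ha, hcase⟩ := sim_form f hf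
  rcases hcase with h | h
  · rw [Multiset.map_congr rfl fun z _ => h z, Xc_affine P hP a b ha, h (Xc P)]
  · rw [Multiset.map_congr rfl fun z _ => h z, Xc_anti P hP a b ha, h (Xc P)]

lemma no_fix_singleton (P : Multiset ℂ) (hP : Multiset.card P ≠ 0)
    (hg : (momS P).gcd id = 1) : ¬∃ x : ℂ, FixMultiset P = {x} := by
  rintro ⟨x, hx⟩
  have hcen : cen P ∈ FixMultiset P := fun T hT hTP => cen_fixed P hP T hT hTP
  have hXc : Xc P ∈ FixMultiset P := by
    intro T hT hTP
    have := Xc_equivariant P hP T (isom_is_sim T hT)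
    rw [hTP] at this
    exact this.symm
  rw [hx] at hcen hXc
  simp only [Set.mem_singleton_iff] at hcen hXc
  have : Xc P = cen P := by rw [hcen, hXc]
  rw [Xc_def, if_pos hg, add_eq_left] at this
  exact vP_ne_zero P this


end Aux

/-- Existence of the center of rotational asymmetry for `n`-multisets: an
`n`-multiset center `X` (defined on all `n`-multisets) such that `X P` equals
the centroid of `P` iff the fixed-point set of the symmetry group of `P`
consists of exactly one point. -/
theorem stmt7 (n : ℕ) (hn : 1 ≤ n) :
    ∃ X : Multiset ℂ → ℂ,
      (∀ P : Multiset ℂ, Multiset.card P = n →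
        ∀ f : ℂ → ℂ, IsSimilarity f → X (Multiset.map f P) = f (X P)) ∧
      (∀ P : Multiset ℂ, Multiset.card P = n →
        (X P = P.sum / (n : ℂ) ↔ ∃ x : ℂ, FixMultiset P = {x})) := by
  refine ⟨Xc, fun P hPc f hf => Xc_equivariant P (by omega) f hf, fun P hPc => ?_⟩
  have hP : Multiset.card P ≠ 0 := by omega
  have hsum : P.sum / (n : ℂ) = cen P := by rw [cen_def, hPc]
  rw [hsum]
  by_cases hg : (momS P).gcd id = 1
  · constructor
    · intro h
      exfalso
      rw [Xc_def, if_pos hg, add_eq_left] at h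
      exact vP_ne_zero P h
    · intro h
      exact absurd h (no_fix_singleton P hP hg)
  · constructor
    · intro _
      exact ⟨cen P, fix_eq_of_sym P hP hg⟩
    · intro _
      rw [Xc_def, if_neg hg, add_zero]
end
end

section
/- (Existence of the center of axial asymmetry for multisets.) For every n ≥ 1 there exist n-multiset centers X̃ and Ỹ, both defined on the family of all n-multisets of points of ℂ, such that for every n-multiset P: (a) X̃(P) equals the centroid of P if and only if Fix(P) consists of exactly one point; and (b) the three points centroid(P), X̃(P), Ỹ(P) are pairwise distinct and not collinear if and only if Fix(P) = ℂ (equivalently, the only symmetry of P is the identity). -/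
noncomputable section

open Complex

namespace Stmt8Aux

attribute [local instance] Classical.propDecidable

lemma sim_id : IsSimilarity id :=
  ⟨Function.bijective_id, 1, one_pos, by simp⟩

lemma sim_comp {f g : ℂ → ℂ} (hf : IsSimilarity f) (hg : IsSimilarity g) :
    IsSimilarity (f ∘ g) := by
  obtain ⟨hfb, r, hr, hfr⟩ := hf
  obtain ⟨hgb, s, hs, hgr⟩ := hg
  exact ⟨hfb.comp hgb, r * s, mul_pos hr hs, fun z w => by
    simp only [Function.comp_apply, hfr, hgr, mul_assoc]⟩

lemma sim_inv {f : ℂ → ℂ} (hf : IsSimilarity f) :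
    ∃ g : ℂ → ℂ, IsSimilarity g ∧ (∀ z, g (f z) = z) ∧ (∀ z, f (g z) = z) := by
  obtain ⟨hfb, r, hr, hfr⟩ := hf
  let e := Equiv.ofBijective f hfb
  have he : ∀ z, f (e.symm z) = z := fun z => e.apply_symm_apply z
  refine ⟨e.symm, ⟨e.symm.bijective, r⁻¹, inv_pos.2 hr, fun z w => ?_⟩,
    fun z => e.symm_apply_apply z, he⟩
  have h1 : ‖f (e.symm z) - f (e.symm w)‖
      = r * ‖e.symm z - e.symm w‖ := hfr _ _
  rw [he, he] at h1
  rw [h1]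
  field_simp

lemma iso_sim {T : ℂ → ℂ} (hT : IsPlaneIsometry T) : IsSimilarity T :=
  ⟨hT.1, 1, one_pos, fun z w => by rw [hT.2, one_mul]⟩

lemma sim_affine {f : ℂ → ℂ} (hf : IsSimilarity f) :
    ∃ (L : ℂ ≃ₗ[ℝ] ℂ) (b : ℂ), ∀ z, f z = L z + b := by
  obtain ⟨hfb, r, hr, hfr⟩ := hf
  have hr0 : (r : ℝ) ≠ 0 := ne_of_gt hr
  set g : ℂ → ℂ := fun z => (r⁻¹ : ℝ) • (f z - f 0) with hgdef
  have hginj : Function.Injective g := by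
    intro a b hab
    have h1 : f a - f 0 = f b - f 0 :=
      smul_right_injective ℂ (inv_ne_zero hr0) hab
    exact hfb.1 (by linear_combination h1)
  have hgsurj : Function.Surjective g := by
    intro w
    obtain ⟨z, hz⟩ := hfb.2 ((r : ℝ) • w + f 0)
    refine ⟨z, ?_⟩
    simp only [hgdef, hz]
    rw [add_sub_cancel_right, smul_smul, inv_mul_cancel₀ hr0, one_smul]
  have hgdist : ∀ z w : ℂ, dist (g z) (g w) = dist z w := by
    intro z w
    simp only [hgdef, Complex.dist_eq]
    have : (r⁻¹ : ℝ) • (f z - f 0) - (r⁻¹ : ℝ) • (f w - f 0)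
        = (r⁻¹ : ℝ) • (f z - f w) := by
      rw [← smul_sub]; ring_nf
    rw [this, Complex.real_smul, norm_mul, Complex.norm_real, Real.norm_eq_abs,
      abs_of_pos (inv_pos.2 hr), hfr]
    field_simp
  let E : ℂ ≃ᵢ ℂ :=
    ⟨Equiv.ofBijective g ⟨hginj, hgsurj⟩, Isometry.of_dist_eq (by exact hgdist)⟩
  have h0 : E 0 = 0 := by
    show g 0 = 0
    simp [hgdef]
  let Lin := E.toRealLinearIsometryEquivOfMapZero h0
  have hLin : ∀ z, (Lin : ℂ → ℂ) z = g z := fun z => by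
    have := IsometryEquiv.coe_toRealLinearIsometryEquivOfMapZero E h0
    rw [this]; rfl
  refine ⟨Lin.toLinearEquiv.trans (LinearEquiv.smulOfNeZero ℝ ℂ r hr0), f 0, fun z => ?_⟩
  have h2 : (r : ℝ) • g z = f z - f 0 := by
    simp only [hgdef, smul_smul, mul_inv_cancel₀ hr0, one_smul]
  have h3 : (Lin.toLinearEquiv.trans (LinearEquiv.smulOfNeZero ℝ ℂ r hr0)) z
      = (r : ℝ) • g z := by
    show (r : ℝ) • (Lin.toLinearEquiv z) = (r : ℝ) • g z
    rw [show (Lin.toLinearEquiv : ℂ → ℂ) z = g z from hLin z]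
  rw [h3, h2]; ring

lemma sum_map_linear_add (L : ℂ →ₗ[ℝ] ℂ) (b : ℂ) (P : Multiset ℂ) :
    (P.map fun z => L z + b).sum = L P.sum + (Multiset.card P) • b := by
  induction P using Multiset.induction_on with
  | empty => simp
  | cons a s ih =>
      simp only [Multiset.map_cons, Multiset.sum_cons, Multiset.card_cons, ih,
        map_add, succ_nsmul]
      abel

lemma centroid_map {f : ℂ → ℂ} (hf : IsSimilarity f) (P : Multiset ℂ) {n : ℕ}
    (hn : n ≠ 0) (hP : Multiset.card P = n) :
    (P.map f).sum / (n : ℂ) = f (P.sum / (n : ℂ)) := by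
  obtain ⟨L, b, hL⟩ := sim_affine hf
  have hmapeq : P.map f = P.map fun z => (L : ℂ →ₗ[ℝ] ℂ) z + b :=
    Multiset.map_congr rfl fun z _ => hL z
  have hn' : (n : ℂ) ≠ 0 := Nat.cast_ne_zero.2 hn
  have hsm : P.sum / (n : ℂ) = ((n : ℝ)⁻¹ : ℝ) • P.sum := by
    rw [Complex.real_smul]
    push_cast
    field_simp
  rw [hmapeq, sum_map_linear_add, hL, hP, hsm, map_smul]
  rw [Complex.real_smul, nsmul_eq_mul]
  push_cast
  field_simp

lemma centroid_mem_fix (P : Multiset ℂ) {n : ℕ} (hn : n ≠ 0)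
    (hP : Multiset.card P = n) : P.sum / (n : ℂ) ∈ FixMultiset P := by
  intro T hT hTP
  have h := centroid_map (iso_sim hT) P hn hP
  rw [hTP] at h
  exact h.symm

lemma fix_map {f : ℂ → ℂ} (hf : IsSimilarity f) (P : Multiset ℂ) :
    FixMultiset (P.map f) = f '' FixMultiset P := by
  obtain ⟨g, hg, hgf, hfg⟩ := sim_inv hf
  obtain ⟨hfb, r, hr, hfr⟩ := hf
  have hgr : ∀ z w, ‖g z - g w‖ = r⁻¹ * ‖z - w‖ := by
    intro z w
    have := hfr (g z) (g w)
    rw [hfg, hfg] at this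
    rw [this]
    field_simp
  ext y
  constructor
  · intro hy
    refine ⟨g y, ?_, hfg y⟩
    intro T hT hTP
    have hT' : IsPlaneIsometry (f ∘ T ∘ g) := by
      refine ⟨hfb.comp (hT.1.comp hg.1), fun z w => ?_⟩
      show ‖f (T (g z)) - f (T (g w))‖ = _
      rw [hfr, hT.2, hgr]
      field_simp
    have hmap : (P.map f).map (f ∘ T ∘ g) = P.map f := by
      rw [Multiset.map_map]
      have hc : (f ∘ T ∘ g) ∘ f = f ∘ T := by
        funext z; simp [Function.comp, hgf]
      rw [hc, ← Multiset.map_map, hTP]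
    have h1 : f (T (g y)) = y := hy _ hT' hmap
    have h2 := congrArg g h1
    rwa [hgf] at h2
  · rintro ⟨x, hx, rfl⟩
    intro T hT hTP
    have hT'' : IsPlaneIsometry (g ∘ T ∘ f) := by
      refine ⟨hg.1.comp (hT.1.comp hfb), fun z w => ?_⟩
      show ‖g (T (f z)) - g (T (f w))‖ = _
      rw [hgr, hT.2, hfr]
      field_simp
    have hmap : P.map (g ∘ T ∘ f) = P := by
      have : P.map (g ∘ T ∘ f) = ((P.map f).map T).map g := by
        rw [Multiset.map_map, Multiset.map_map]; rfl
      rw [this, hTP, Multiset.map_map]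
      have hc : g ∘ f = id := by funext z; simp [Function.comp, hgf]
      rw [hc, Multiset.map_id]
    have h1 : g (T (f x)) = x := hx _ hT'' hmap
    have h2 := congrArg f h1
    rwa [hfg] at h2

lemma stab_fixes {s : ℂ → ℂ} {P : Multiset ℂ} {n : ℕ} (hn : n ≠ 0)
    (hP : Multiset.card P = n) (hs : IsSimilarity s) (hmap : P.map s = P)
    {x : ℂ} (hx : x ∈ FixMultiset P) : s x = x := by
  obtain ⟨hsb, r, hr, hsr⟩ := hs
  have hPne : P ≠ 0 := by
    intro h0
    rw [h0] at hP
    simp at hP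
    exact hn hP.symm
  obtain ⟨a, ha⟩ := Multiset.exists_mem_of_ne_zero hPne
  by_cases hall : ∀ b ∈ P, b = a
  · -- all points coincide
    have hrep : P = Multiset.replicate n a :=
      Multiset.eq_replicate.2 ⟨hP, hall⟩
    have hTiso : IsPlaneIsometry (fun z => 2 * a - z) := by
      constructor
      · have hinv : Function.Involutive (fun z : ℂ => 2 * a - z) := fun z => by ring
        exact hinv.bijective
      · intro z w
        have : (2 * a - z) - (2 * a - w) = -(z - w) := by ring
        rw [this, norm_neg]
    have hTmap : P.map (fun z => 2 * a - z) = P := by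
      rw [hrep, Multiset.map_replicate, show 2 * a - a = a by ring]
    have hxa : x = a := by
      have := hx _ hTiso hTmap
      linear_combination -this / 2
    have hsa : s a = a := by
      have : s a ∈ P.map s := Multiset.mem_map_of_mem s ha
      rw [hmap] at this
      exact hall _ this
    rw [hxa, hsa]
  · -- two distinct points exist: the ratio must be 1
    push_neg at hall
    obtain ⟨b, hb, hba⟩ := hall
    have inner : ∀ c : ℂ, (((P.map s).map fun d => ‖s c - d‖)).sum
        = r * ((P.map fun d => ‖c - d‖).sum) := by
      intro c
      have h2 : ((P.map s).map fun d => ‖s c - d‖)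
          = P.map fun d => r * ‖c - d‖ := by
        rw [Multiset.map_map]
        exact Multiset.map_congr rfl fun d _ => hsr c d
      rw [h2]
      exact Multiset.sum_map_mul_left
    have key : ((P.map s).map fun c => (((P.map s).map
        fun d => ‖c - d‖).sum)).sum
        = r * (P.map fun c => ((P.map fun d => ‖c - d‖).sum)).sum := by
      have h3 : ((P.map s).map fun c => (((P.map s).map
          fun d => ‖c - d‖).sum))
          = P.map fun c => r * ((P.map fun d => ‖c - d‖).sum) := by
        rw [Multiset.map_map]
        exact Multiset.map_congr rfl fun c _ => inner c
      rw [h3]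
      exact Multiset.sum_map_mul_left
    have hSS : (P.map fun c => ((P.map fun d => ‖c - d‖).sum)).sum
        = r * (P.map fun c => ((P.map fun d => ‖c - d‖).sum)).sum := by
      conv_lhs => rw [← hmap]
      exact key
    set S : ℝ := (P.map fun c => ((P.map fun d => ‖c - d‖).sum)).sum with hS
    have hSpos : 0 < S := by
      have h1 : ‖a - b‖ ≤ (P.map fun d => ‖a - d‖).sum := by
        refine Multiset.single_le_sum (fun y hy => ?_) _ ?_
        · obtain ⟨d, _, rfl⟩ := Multiset.mem_map.1 hy
          exact norm_nonneg _
        · exact Multiset.mem_map_of_mem _ hb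
      have h2 : (P.map fun d => ‖a - d‖).sum ≤ S := by
        rw [hS]
        refine Multiset.single_le_sum (fun y hy => ?_) _ ?_
        · obtain ⟨c, _, rfl⟩ := Multiset.mem_map.1 hy
          exact Multiset.sum_nonneg fun y hy => by
            obtain ⟨d, _, rfl⟩ := Multiset.mem_map.1 hy
            exact norm_nonneg _
        · exact Multiset.mem_map_of_mem _ ha
      have h3 : 0 < ‖a - b‖ := by
        rw [norm_pos_iff]
        exact sub_ne_zero.2 (fun h => hba h.symm)
      linarith
    have hr1 : r = 1 := by
      have : (r - 1) * S = 0 := by linear_combination -hSS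
      rcases mul_eq_zero.1 this with h | h
      · linarith
      · linarith
    have hiso : IsPlaneIsometry s := ⟨hsb, fun z w => by rw [hsr, hr1, one_mul]⟩
    exact hx s hiso hmap

lemma collinear_image_affine (L : ℂ →ₗ[ℝ] ℂ) (b : ℂ) {s : Set ℂ}
    (h : Collinear ℝ s) : Collinear ℝ ((fun z => L z + b) '' s) := by
  rw [collinear_iff_exists_forall_eq_smul_vadd] at h ⊢
  obtain ⟨p₀, v, hv⟩ := h
  refine ⟨L p₀ + b, L v, ?_⟩
  rintro p ⟨q, hq, rfl⟩
  obtain ⟨t, rfl⟩ := hv q hq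
  refine ⟨t, ?_⟩
  simp only [vadd_eq_add, map_add, map_smul]
  abel

lemma not_collinear_base (c : ℂ) :
    ¬ Collinear ℝ ({c, c + 1, c + Complex.I} : Set ℂ) := by
  intro h
  rw [collinear_iff_of_mem (Set.mem_insert c _)] at h
  obtain ⟨v, hv⟩ := h
  obtain ⟨t, ht⟩ := hv (c + 1) (by simp)
  obtain ⟨u, hu⟩ := hv (c + Complex.I) (by simp)
  rw [vadd_eq_add] at ht hu
  have h1 : (1 : ℂ) = t • v := by linear_combination ht
  have hI : Complex.I = u • v := by linear_combination hu
  have ht0 : t ≠ 0 := by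
    intro h0
    rw [h0, zero_smul] at h1
    exact one_ne_zero h1
  have hv1 : v = t⁻¹ • (1 : ℂ) := by
    rw [h1, smul_smul, inv_mul_cancel₀ ht0, one_smul]
  have : Complex.I = ((u * t⁻¹ : ℝ) : ℂ) := by
    rw [hI, hv1, smul_smul, Complex.real_smul, mul_one]
  have him := congrArg Complex.im this
  simp at him

def simSetoid : Setoid (Multiset ℂ) where
  r P Q := ∃ f : ℂ → ℂ, IsSimilarity f ∧ P.map f = Q
  iseqv := by
    refine ⟨fun P => ⟨id, sim_id, Multiset.map_id P⟩, ?_, ?_⟩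
    · rintro P Q ⟨f, hf, rfl⟩
      obtain ⟨g, hg, hgf, hfg⟩ := sim_inv hf
      refine ⟨g, hg, ?_⟩
      rw [Multiset.map_map]
      have : g ∘ f = id := by funext z; simp [Function.comp, hgf]
      rw [this, Multiset.map_id]
    · rintro P Q R ⟨f, hf, rfl⟩ ⟨g, hg, rfl⟩
      exact ⟨g ∘ f, sim_comp hg hf, (Multiset.map_map g f P).symm⟩

def repm (P : Multiset ℂ) : Multiset ℂ := (Quotient.mk simSetoid P).out

lemma repm_rel (P : Multiset ℂ) :
    ∃ f : ℂ → ℂ, IsSimilarity f ∧ (repm P).map f = P :=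
  Quotient.mk_out (s := simSetoid) P

lemma repm_eq {P Q : Multiset ℂ} {f : ℂ → ℂ} (hf : IsSimilarity f)
    (h : P.map f = Q) : repm P = repm Q := by
  unfold repm
  rw [Quotient.sound (⟨f, hf, h⟩ : (simSetoid) P Q)]

def gmap (P : Multiset ℂ) : ℂ → ℂ := (repm_rel P).choose

lemma gmap_spec (P : Multiset ℂ) :
    IsSimilarity (gmap P) ∧ (repm P).map (gmap P) = P :=
  (repm_rel P).choose_spec

lemma card_repm (P : Multiset ℂ) : Multiset.card (repm P) = Multiset.card P := by
  conv_rhs => rw [← (gmap_spec P).2]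
  rw [Multiset.card_map]

/-- base point X at a representative -/
def baseX (n : ℕ) (Q : Multiset ℂ) : ℂ :=
  if FixMultiset Q = Set.univ then Q.sum / (n : ℂ) + 1
  else if h2 : ∃ x : ℂ, FixMultiset Q = {x} then h2.choose
  else if h3 : ∃ p : ℂ, p ∈ FixMultiset Q ∧ p ≠ Q.sum / (n : ℂ) then h3.choose
  else Q.sum / (n : ℂ)

def baseY (n : ℕ) (Q : Multiset ℂ) : ℂ :=
  if FixMultiset Q = Set.univ then Q.sum / (n : ℂ) + Complex.I
  else baseX n Q

lemma baseX_mem_fix {n : ℕ} (hn : n ≠ 0) (Q : Multiset ℂ)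
    (hQ : Multiset.card Q = n) : baseX n Q ∈ FixMultiset Q := by
  have hc : Q.sum / (n : ℂ) ∈ FixMultiset Q := centroid_mem_fix Q hn hQ
  unfold baseX
  split_ifs with h1 h2 h3
  · rw [h1]; trivial
  · exact h2.choose_spec.symm.subset rfl
  · exact h3.choose_spec.1
  · exact hc

lemma baseY_mem_fix {n : ℕ} (hn : n ≠ 0) (Q : Multiset ℂ)
    (hQ : Multiset.card Q = n) : baseY n Q ∈ FixMultiset Q := by
  have hc : Q.sum / (n : ℂ) ∈ FixMultiset Q := centroid_mem_fix Q hn hQ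
  unfold baseY
  split_ifs with h1
  · rw [h1]; trivial
  · exact baseX_mem_fix hn Q hQ


lemma image_singleton_iff {f g : ℂ → ℂ} (hgf : ∀ z, g (f z) = z)
    (hfg : ∀ z, f (g z) = z) (S : Set ℂ) :
    (∃ x, f '' S = {x}) ↔ ∃ x, S = {x} := by
  constructor
  · rintro ⟨x, hx⟩
    refine ⟨g x, ?_⟩
    have hne : S.Nonempty := by
      by_contra h
      rw [Set.not_nonempty_iff_eq_empty] at h
      rw [h, Set.image_empty] at hx
      exact (Set.singleton_nonempty x).ne_empty hx.symm
    ext p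
    simp only [Set.mem_singleton_iff]
    constructor
    · intro hp
      have h1 : f p ∈ f '' S := Set.mem_image_of_mem f hp
      rw [hx, Set.mem_singleton_iff] at h1
      have h2 := congrArg g h1
      rwa [hgf] at h2
    · intro hp
      obtain ⟨q, hq⟩ := hne
      have h1 : f q ∈ f '' S := Set.mem_image_of_mem f hq
      rw [hx, Set.mem_singleton_iff] at h1
      have h2 : q = g x := by rw [← hgf q, h1]
      rw [hp, ← h2]
      exact hq
  · rintro ⟨x, rfl⟩
    exact ⟨f x, Set.image_singleton⟩

lemma image_univ_iff {f g : ℂ → ℂ} (hgf : ∀ z, g (f z) = z)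
    (hfg : ∀ z, f (g z) = z) (S : Set ℂ) :
    f '' S = Set.univ ↔ S = Set.univ := by
  constructor
  · intro h
    ext p; simp only [Set.mem_univ, iff_true]
    have h1 : f p ∈ f '' S := by rw [h]; trivial
    obtain ⟨q, hq, hq2⟩ := h1
    have h2 : q = p := by rw [← hgf q, hq2, hgf]
    rwa [← h2]
  · rintro rfl
    ext p; simp only [Set.mem_univ, iff_true]
    exact ⟨g p, trivial, hfg p⟩

lemma collinear_image {f : ℂ → ℂ} (hf : IsSimilarity f) {S : Set ℂ}
    (h : Collinear ℝ S) : Collinear ℝ (f '' S) := by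
  obtain ⟨L, b, hL⟩ := sim_affine hf
  have himg : f '' S = (fun z => (L : ℂ →ₗ[ℝ] ℂ) z + b) '' S :=
    Set.image_congr fun x _ => hL x
  rw [himg]
  exact collinear_image_affine _ b h

lemma collinear_image_iff {f g : ℂ → ℂ} (hf : IsSimilarity f) (hg : IsSimilarity g)
    (hgf : ∀ z, g (f z) = z) (S : Set ℂ) :
    Collinear ℝ (f '' S) ↔ Collinear ℝ S := by
  constructor
  · intro h
    have h2 := collinear_image hg h
    have h3 : g '' (f '' S) = S := by
      rw [Set.image_image]
      simp only [hgf, Set.image_id']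
    rwa [h3] at h2
  · exact collinear_image hf

lemma equiv_gen {n : ℕ} (hn : n ≠ 0) (bfun : Multiset ℂ → ℂ)
    (hbfun : ∀ Q, Multiset.card Q = n → bfun Q ∈ FixMultiset Q)
    {P : Multiset ℂ} (hP : Multiset.card P = n) {f : ℂ → ℂ} (hf : IsSimilarity f) :
    gmap (P.map f) (bfun (repm (P.map f))) = f (gmap P (bfun (repm P))) := by
  have hrepeq : repm (P.map f) = repm P := (repm_eq hf rfl).symm
  rw [hrepeq]
  have hcardR : Multiset.card (repm P) = n := by rw [card_repm]; exact hP
  have hmem : bfun (repm P) ∈ FixMultiset (repm P) := hbfun _ hcardR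
  obtain ⟨husim, humap⟩ := gmap_spec (P.map f)
  rw [hrepeq] at humap
  obtain ⟨hgsim, hgmap⟩ := gmap_spec P
  obtain ⟨u', hu'sim, hu'u, huu'⟩ := sim_inv husim
  have hvsim : IsSimilarity (f ∘ gmap P) := sim_comp hf hgsim
  have hvmap : (repm P).map (f ∘ gmap P) = P.map f := by
    rw [← Multiset.map_map, hgmap]
  have hssim : IsSimilarity (u' ∘ (f ∘ gmap P)) := sim_comp hu'sim hvsim
  have hsmap : (repm P).map (u' ∘ (f ∘ gmap P)) = repm P := by
    rw [← Multiset.map_map, hvmap, ← humap, Multiset.map_map]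
    have : u' ∘ gmap (P.map f) = id := by funext z; simp [Function.comp, hu'u]
    rw [this, Multiset.map_id]
  have hfixed : (u' ∘ (f ∘ gmap P)) (bfun (repm P)) = bfun (repm P) :=
    stab_fixes hn hcardR hssim hsmap hmem
  have h2 := congrArg (gmap (P.map f)) hfixed
  simp only [Function.comp_apply] at h2
  rw [huu'] at h2
  exact h2.symm

lemma baseXY_univ {n : ℕ} {Q : Multiset ℂ} (h1 : FixMultiset Q = Set.univ) :
    baseX n Q = Q.sum / (n : ℂ) + 1 ∧ baseY n Q = Q.sum / (n : ℂ) + Complex.I := by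
  unfold baseX baseY
  rw [if_pos h1, if_pos h1]
  exact ⟨rfl, rfl⟩

lemma baseY_eq_baseX {n : ℕ} {Q : Multiset ℂ} (h1 : ¬ FixMultiset Q = Set.univ) :
    baseY n Q = baseX n Q := by
  unfold baseY
  rw [if_neg h1]

lemma baseX_singleton {n : ℕ} (hn : n ≠ 0) {Q : Multiset ℂ}
    (hQ : Multiset.card Q = n) (h1 : ¬ FixMultiset Q = Set.univ)
    (h2 : ∃ x : ℂ, FixMultiset Q = {x}) : baseX n Q = Q.sum / (n : ℂ) := by
  unfold baseX
  rw [if_neg h1, dif_pos h2]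
  have hc := centroid_mem_fix Q hn hQ
  rw [h2.choose_spec, Set.mem_singleton_iff] at hc
  exact hc.symm

lemma fix_eq_centroid_singleton {n : ℕ} (hn : n ≠ 0) {Q : Multiset ℂ}
    (hQ : Multiset.card Q = n) (h3 : ¬ ∃ p : ℂ, p ∈ FixMultiset Q ∧ p ≠ Q.sum / (n : ℂ)) :
    FixMultiset Q = {Q.sum / (n : ℂ)} := by
  push_neg at h3
  ext p
  simp only [Set.mem_singleton_iff]
  exact ⟨fun hp => h3 p hp, fun hp => hp ▸ centroid_mem_fix Q hn hQ⟩

lemma baseX_line {n : ℕ} (hn : n ≠ 0) {Q : Multiset ℂ}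
    (hQ : Multiset.card Q = n) (h1 : ¬ FixMultiset Q = Set.univ)
    (h2 : ¬ ∃ x : ℂ, FixMultiset Q = {x}) : baseX n Q ≠ Q.sum / (n : ℂ) := by
  have h3 : ∃ p : ℂ, p ∈ FixMultiset Q ∧ p ≠ Q.sum / (n : ℂ) := by
    by_contra h3
    exact h2 ⟨_, fix_eq_centroid_singleton hn hQ h3⟩
  unfold baseX
  rw [if_neg h1, dif_neg h2, dif_pos h3]
  exact h3.choose_spec.2

lemma not_exists_univ_singleton : ¬ ∃ x : ℂ, (Set.univ : Set ℂ) = {x} := by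
  rintro ⟨x, hx⟩
  have h0 : (0 : ℂ) ∈ ({x} : Set ℂ) := hx ▸ Set.mem_univ 0
  have h1 : (1 : ℂ) ∈ ({x} : Set ℂ) := hx ▸ Set.mem_univ 1
  rw [Set.mem_singleton_iff] at h0 h1
  exact one_ne_zero (h1.trans h0.symm)

end Stmt8Aux

open Stmt8Aux in
/-- Existence of the centers of rotational and axial asymmetry for
`n`-multisets: `n`-multiset centers `X` and `Y` such that (a) `X P` equals the
centroid of `P` iff `Fix P` is a single point, and (b) the centroid, `X P` and
`Y P` are pairwise distinct and not collinear iff `Fix P = ℂ`. -/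
theorem stmt8 (n : ℕ) (hn : 1 ≤ n) :
    ∃ X Y : Multiset ℂ → ℂ,
      (∀ P : Multiset ℂ, Multiset.card P = n →
        ∀ f : ℂ → ℂ, IsSimilarity f → X (Multiset.map f P) = f (X P)) ∧
      (∀ P : Multiset ℂ, Multiset.card P = n →
        ∀ f : ℂ → ℂ, IsSimilarity f → Y (Multiset.map f P) = f (Y P)) ∧
      (∀ P : Multiset ℂ, Multiset.card P = n →
        (X P = P.sum / (n : ℂ) ↔ ∃ x : ℂ, FixMultiset P = {x})) ∧
      (∀ P : Multiset ℂ, Multiset.card P = n →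
        ((P.sum / (n : ℂ) ≠ X P ∧ P.sum / (n : ℂ) ≠ Y P ∧ X P ≠ Y P ∧
            ¬ Collinear ℝ ({P.sum / (n : ℂ), X P, Y P} : Set ℂ)) ↔
          FixMultiset P = Set.univ)) := by
  have hn0 : n ≠ 0 := by omega
  refine ⟨fun P => gmap P (baseX n (repm P)), fun P => gmap P (baseY n (repm P)),
    ?_, ?_, ?_, ?_⟩
  · intro P hP f hf
    exact equiv_gen hn0 (baseX n) (fun Q hQ => baseX_mem_fix hn0 Q hQ) hP hf
  · intro P hP f hf
    exact equiv_gen hn0 (baseY n) (fun Q hQ => baseY_mem_fix hn0 Q hQ) hP hf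
  · intro P hP
    beta_reduce
    obtain ⟨hgsim, hgmap⟩ := gmap_spec P
    obtain ⟨g', hg'sim, hg'g, hgg'⟩ := sim_inv hgsim
    have hcardR : Multiset.card (repm P) = n := by rw [card_repm]; exact hP
    have hginj : Function.Injective (gmap P) := fun a b h => by
      rw [← hg'g a, h, hg'g]
    have hfix : FixMultiset P = gmap P '' FixMultiset (repm P) := by
      have h := fix_map hgsim (repm P)
      rwa [hgmap] at h
    have hcent : P.sum / (n : ℂ) = gmap P ((repm P).sum / (n : ℂ)) := by
      have h := centroid_map hgsim (repm P) hn0 hcardR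
      rwa [hgmap] at h
    have hRHS : (∃ x : ℂ, FixMultiset P = {x}) ↔
        ∃ x : ℂ, FixMultiset (repm P) = {x} := by
      rw [hfix]
      exact image_singleton_iff hg'g hgg' _
    have hLHS : gmap P (baseX n (repm P)) = P.sum / (n : ℂ) ↔
        baseX n (repm P) = (repm P).sum / (n : ℂ) := by
      rw [hcent]
      exact ⟨fun h => hginj h, fun h => by rw [h]⟩
    rw [hLHS, hRHS]
    by_cases h1 : FixMultiset (repm P) = Set.univ
    · rw [(baseXY_univ h1).1]
      constructor
      · intro h
        exact absurd h (by simp)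
      · intro h
        rw [h1] at h
        exact absurd h not_exists_univ_singleton
    · by_cases h2 : ∃ x : ℂ, FixMultiset (repm P) = {x}
      · simp only [baseX_singleton hn0 hcardR h1 h2, h2, iff_true]
      · simp only [baseX_line hn0 hcardR h1 h2, h2, iff_false, not_false_iff]
  · intro P hP
    beta_reduce
    obtain ⟨hgsim, hgmap⟩ := gmap_spec P
    obtain ⟨g', hg'sim, hg'g, hgg'⟩ := sim_inv hgsim
    have hcardR : Multiset.card (repm P) = n := by rw [card_repm]; exact hP
    have hginj : Function.Injective (gmap P) := fun a b h => by
      rw [← hg'g a, h, hg'g]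
    have hfix : FixMultiset P = gmap P '' FixMultiset (repm P) := by
      have h := fix_map hgsim (repm P)
      rwa [hgmap] at h
    have hcent : P.sum / (n : ℂ) = gmap P ((repm P).sum / (n : ℂ)) := by
      have h := centroid_map hgsim (repm P) hn0 hcardR
      rwa [hgmap] at h
    have hRHS : FixMultiset P = Set.univ ↔ FixMultiset (repm P) = Set.univ := by
      rw [hfix]
      exact image_univ_iff hg'g hgg' _
    rw [hRHS]
    by_cases h1 : FixMultiset (repm P) = Set.univ
    · obtain ⟨hbX, hbY⟩ := baseXY_univ (n := n) h1
      rw [hbX, hbY, iff_true_intro h1, iff_true]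
      set c := (repm P).sum / (n : ℂ) with hc
      refine ⟨?_, ?_, ?_, ?_⟩
      · rw [hcent]
        intro h
        have := hginj h
        simp at this
      · rw [hcent]
        intro h
        have := hginj h
        have : (0 : ℂ) = Complex.I := by linear_combination this
        exact Complex.I_ne_zero this.symm
      · intro h
        have := hginj h
        have h2 : (1 : ℂ) = Complex.I := by linear_combination this
        have := congrArg Complex.im h2
        simp at this
      · rw [hcent]
        have himg : ({gmap P c, gmap P (c + 1), gmap P (c + Complex.I)} : Set ℂ)
            = gmap P '' {c, c + 1, c + Complex.I} := by
          rw [Set.image_insert_eq, Set.image_insert_eq, Set.image_singleton]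
        rw [himg, collinear_image_iff hgsim hg'sim hg'g]
        exact not_collinear_base c
    · rw [baseY_eq_baseX (n := n) h1, iff_false_intro h1, iff_false]
      intro h
      exact h.2.2.1 rfl
end
end
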